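/- arXiv:1801.08050 — 6 statements merged into one kernel-verified Lean document; each statement's English description precedes it below -/
import Mathlib

section
/- Let G = H⟨a⟩ be a group with H a normal abelian subgroup. Then a is an almost right Engel element if and only if a is an almost left Engel element, and in that case the minimal right Engel sink R(a) equals the minimal left Engel sink L(a). -/
/-- Left-normed iterated commutator `[g, x, x, ..., x]` (`x` repeated `n` times),
where `[u,v] = u⁻¹v⁻¹uv`. -/
def rcomm {G : Type*} [Group G] (g x : G) : ℕ → G
  | 0 => g
  | n + 1 => (rcomm g x n)⁻¹ * x⁻¹ * (rcomm g x n) * x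

/-- Left-normed iterated commutator `[x, g, g, ..., g]` (`g` repeated `n` times). -/
def lcomm {G : Type*} [Group G] (x g : G) : ℕ → G
  | 0 => x
  | n + 1 => (lcomm x g n)⁻¹ * g⁻¹ * (lcomm x g n) * g

/-- `R` is a right Engel sink of `g`. -/
def IsRightEngelSink {G : Type*} [Group G] (R : Set G) (g : G) : Prop :=
  ∀ x : G, ∃ N : ℕ, ∀ n ≥ N, rcomm g x n ∈ R

/-- `L` is a left Engel sink of `g`. -/
def IsLeftEngelSink {G : Type*} [Group G] (L : Set G) (g : G) : Prop :=
  ∀ x : G, ∃ N : ℕ, ∀ n ≥ N, lcomm x g n ∈ L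

/-- `R` is the minimal right Engel sink of `g`. -/
def IsMinRightEngelSink {G : Type*} [Group G] (R : Set G) (g : G) : Prop :=
  IsRightEngelSink R g ∧ ∀ S : Set G, IsRightEngelSink S g → R ⊆ S

/-- `L` is the minimal left Engel sink of `g`. -/
def IsMinLeftEngelSink {G : Type*} [Group G] (L : Set G) (g : G) : Prop :=
  IsLeftEngelSink L g ∧ ∀ S : Set G, IsLeftEngelSink S g → L ⊆ S

/-- `[H, a]`: the subgroup generated by all `h⁻¹ * h^a` with `h ∈ H`. -/
def commSub {G : Type*} [Group G] (H : Subgroup G) (a : G) : Subgroup G :=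
  Subgroup.closure {z : G | ∃ h ∈ H, z = h⁻¹ * (a⁻¹ * h * a)}

/-- A group is hypercentral iff its transfinite upper central series reaches the
whole group; equivalently, every proper quotient has nontrivial center,
which is the formulation used here. -/
def IsHypercentral (G : Type*) [Group G] : Prop :=
  ∀ N : Subgroup G, N.Normal → N ≠ ⊤ → ∃ g, g ∉ N ∧ ∀ x : G, g⁻¹ * x⁻¹ * g * x ∈ N

set_option linter.unusedSectionVars false

namespace Stmt7

open Pointwise

variable {G : Type*} [Group G]

/-- commutator map `y ↦ [y, x]` -/
def um (x y : G) : G := y⁻¹ * x⁻¹ * y * x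

lemma lcomm_eq_iter (x g : G) : ∀ n, lcomm x g n = (um g)^[n] x
  | 0 => rfl
  | n+1 => by rw [Function.iterate_succ_apply', ← lcomm_eq_iter x g n]; rfl

lemma rcomm_eq_iter (g x : G) : ∀ n, rcomm g x n = (um x)^[n] g
  | 0 => rfl
  | n+1 => by rw [Function.iterate_succ_apply', ← rcomm_eq_iter g x n]; rfl

variable (H : Subgroup G) (a : G)

lemma conj_mem' (hN : H.Normal) {y : G} (hy : y ∈ H) (x : G) : x⁻¹ * y * x ∈ H := by
  simpa using hN.conj_mem y hy x⁻¹

lemma um_mem (hN : H.Normal) (x : G) {y : G} (hy : y ∈ H) : um x y ∈ H := by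
  have e : um x y = y⁻¹ * (x⁻¹ * y * x) := by simp [um]; group
  rw [e]; exact mul_mem (inv_mem hy) (conj_mem' H hN hy x)

lemma iter_um_mem (hN : H.Normal) (x : G) {y : G} (hy : y ∈ H) : ∀ n, (um x)^[n] y ∈ H
  | 0 => hy
  | n+1 => by
      rw [Function.iterate_succ_apply']
      exact um_mem H hN x (iter_um_mem hN x hy n)

section withab
variable (hN : H.Normal) (hab : ∀ h₁ ∈ H, ∀ h₂ ∈ H, h₁ * h₂ = h₂ * h₁)

include hN hab

omit hN in
lemma comm3 {p q r : G} (hp : p ∈ H) (hq : q ∈ H) (hr : r ∈ H) : p * q * r = r * q * p := by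
  rw [hab p hp q hq, mul_assoc, hab p hp r hr, ← mul_assoc, hab q hq r hr]

lemma um_mul (x : G) {u v : G} (hu : u ∈ H) (hv : v ∈ H) :
    um x (u * v) = um x u * um x v := by
  have h1 : um x (u * v) = v⁻¹ * um x u * (x⁻¹ * v * x) := by simp [um]; group
  have h2 : um x u * um x v = um x u * v⁻¹ * (x⁻¹ * v * x) := by simp [um]; group
  rw [h1, h2, hab v⁻¹ (inv_mem hv) (um x u) (um_mem H hN x hu)]

lemma um_inv (x : G) {u : G} (hu : u ∈ H) : um x u⁻¹ = (um x u)⁻¹ := by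
  have h1 : um x u⁻¹ = u * (x⁻¹ * u⁻¹ * x) := by simp [um]; group
  have h2 : (um x u)⁻¹ = (x⁻¹ * u⁻¹ * x) * u := by simp [um]; group
  rw [h1, h2, hab u hu _ (conj_mem' H hN (inv_mem hu) x)]

lemma iter_um_mul (x : G) {u v : G} (hu : u ∈ H) (hv : v ∈ H) :
    ∀ n, (um x)^[n] (u * v) = (um x)^[n] u * (um x)^[n] v
  | 0 => rfl
  | n+1 => by
      rw [Function.iterate_succ_apply, um_mul H hN hab x hu hv,
        iter_um_mul x (um_mem H hN x hu) (um_mem H hN x hv) n,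
        ← Function.iterate_succ_apply, ← Function.iterate_succ_apply]

lemma iter_um_inv (x : G) {u : G} (hu : u ∈ H) :
    ∀ n, (um x)^[n] u⁻¹ = ((um x)^[n] u)⁻¹
  | 0 => rfl
  | n+1 => by
      rw [Function.iterate_succ_apply, um_inv H hN hab x hu,
        iter_um_inv x (um_mem H hN x hu) n, ← Function.iterate_succ_apply]

lemma um_comm {b c w : G} (hbc : b * c = c * b) (hw : w ∈ H) :
    um b (um c w) = um c (um b w) := by
  have h1 : um b (um c w) =
      (c⁻¹ * w⁻¹ * c) * w * (b⁻¹ * w⁻¹ * b) * ((c * b)⁻¹ * w * (c * b)) := by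
    simp [um]; group
  have h2 : um c (um b w) =
      (b⁻¹ * w⁻¹ * b) * w * (c⁻¹ * w⁻¹ * c) * ((b * c)⁻¹ * w * (b * c)) := by
    simp [um]; group
  rw [h1, h2, hbc,
    comm3 H hab (conj_mem' H hN (inv_mem hw) c) hw (conj_mem' H hN (inv_mem hw) b)]



end withab


lemma um_conj_pow (k : ℤ) (y : G) :
    um a ((a ^ k)⁻¹ * y * a ^ k) = (a ^ k)⁻¹ * um a y * a ^ k := by simp [um]; group

lemma um_conj_a (y : G) : um a (a⁻¹ * y * a) = a⁻¹ * um a y * a := by simp [um]; group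

lemma um_conj_a' (y : G) : um a (a * y * a⁻¹) = a * um a y * a⁻¹ := by simp [um]; group

lemma iter_um_conj_pow (k : ℤ) (y : G) (n : ℕ) :
    (um a)^[n] ((a ^ k)⁻¹ * y * a ^ k) = (a ^ k)⁻¹ * ((um a)^[n] y) * a ^ k := by
  induction n generalizing y with
  | zero => rfl
  | succ n ih =>
      rw [Function.iterate_succ_apply, um_conj_pow, ih, Function.iterate_succ_apply]

lemma iter_um_conj_a (y : G) (n : ℕ) :
    (um a)^[n] (a⁻¹ * y * a) = a⁻¹ * ((um a)^[n] y) * a := by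
  induction n generalizing y with
  | zero => rfl
  | succ n ih =>
      rw [Function.iterate_succ_apply, um_conj_a, ih, Function.iterate_succ_apply]

lemma iter_um_conj_a' (y : G) (n : ℕ) :
    (um a)^[n] (a * y * a⁻¹) = a * ((um a)^[n] y) * a⁻¹ := by
  induction n generalizing y with
  | zero => rfl
  | succ n ih =>
      rw [Function.iterate_succ_apply, um_conj_a', ih, Function.iterate_succ_apply]

lemma um_one_fix (x : G) : um x 1 = 1 := by simp [um]

lemma iter_um_one (x : G) (n : ℕ) : (um x)^[n] (1 : G) = 1 := by
  induction n with
  | zero => rfl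
  | succ n ih => rw [Function.iterate_succ_apply', ih, um_one_fix]

lemma decomp_iter (h : G) (k : ℤ) (n : ℕ) :
    (um a)^[n+1] (h * a ^ k) = (a ^ k)⁻¹ * ((um a)^[n+1] h) * a ^ k := by
  induction n with
  | zero => simpa using (show um a (h * a ^ k) = (a ^ k)⁻¹ * um a h * a ^ k by simp [um]; group)
  | succ n ih =>
      rw [Function.iterate_succ_apply' (um a) (n+1), ih, um_conj_pow,
        Function.iterate_succ_apply' (um a) (n+1)]

/-- A subset of `H` closed under the relevant operations. -/
structure Good (V : Set G) : Prop where
  subH : V ⊆ (H : Set G)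
  one_mem : (1 : G) ∈ V
  mul_mem : ∀ u ∈ V, ∀ v ∈ V, u * v ∈ V
  inv_mem : ∀ v ∈ V, v⁻¹ ∈ V
  cdown : ∀ v ∈ V, a⁻¹ * v * a ∈ V
  cup : ∀ v ∈ V, a * v * a⁻¹ ∈ V

lemma Good.cpow {V : Set G} (g : Good H a V) {v : G} (hv : v ∈ V) (k : ℤ) :
    (a ^ k)⁻¹ * v * a ^ k ∈ V := by
  induction k using Int.induction_on with
  | zero => simpa using hv
  | succ k ih =>
      have e : (a ^ ((k : ℤ) + 1))⁻¹ * v * a ^ ((k : ℤ) + 1)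
          = a⁻¹ * ((a ^ (k : ℤ))⁻¹ * v * a ^ (k : ℤ)) * a := by group
      rw [e]; exact g.cdown _ ih
  | pred k ih =>
      have e : (a ^ (-(k : ℤ) - 1))⁻¹ * v * a ^ (-(k : ℤ) - 1)
          = a * ((a ^ (-(k : ℤ)))⁻¹ * v * a ^ (-(k : ℤ))) * a⁻¹ := by group
      rw [e]; exact g.cup _ ih

lemma Good.upow {V : Set G} (g : Good H a V) {u : G} (hu : um a u ∈ V) (k : ℤ) :
    um (a ^ k) u ∈ V := by
  induction k using Int.induction_on with
  | zero =>
      have e : um (a ^ (0 : ℤ)) u = 1 := by simp [um]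
      rw [e]; exact g.one_mem
  | succ k ih =>
      have e : um (a ^ ((k : ℤ) + 1)) u
          = um (a ^ (k : ℤ)) u * ((a ^ (k : ℤ))⁻¹ * um a u * a ^ (k : ℤ)) := by
        simp [um]; group
      rw [e]; exact g.mul_mem _ ih _ (Good.cpow H a g hu (k : ℤ))
  | pred k ih =>
      have e : um (a ^ (-(k : ℤ) - 1)) u
          = um (a ^ (-(k : ℤ))) u
            * ((a ^ (-(k : ℤ)))⁻¹ * (a * (um a u)⁻¹ * a⁻¹) * a ^ (-(k : ℤ))) := by
        simp [um]; group
      rw [e]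
      exact g.mul_mem _ ih _ (Good.cpow H a g (g.cup _ (g.inv_mem _ hu)) (-(k : ℤ)))

section withab2
variable (hN : H.Normal) (hab : ∀ h₁ ∈ H, ∀ h₂ ∈ H, h₁ * h₂ = h₂ * h₁)
include hN hab

lemma iter_um_comm (k : ℤ) {w : G} (hw : w ∈ H) (n : ℕ) :
    (um a)^[n] (um (a ^ k) w) = um (a ^ k) ((um a)^[n] w) := by
  induction n with
  | zero => rfl
  | succ n ih =>
      rw [Function.iterate_succ_apply', ih, Function.iterate_succ_apply']
      exact um_comm H hN hab (show a * a ^ k = a ^ k * a by group)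
        (iter_um_mem H hN a hw n)

lemma key {V : Set G} (g : Good H a V) (k : ℤ) (n : ℕ) {w : G} (hw : w ∈ H)
    (h : (um a)^[n] w ∈ V) : (um (a ^ k))^[n] w ∈ V := by
  induction n generalizing w with
  | zero => exact h
  | succ n ih =>
      have h1 : um a ((um a)^[n] w) ∈ V :=
        (Function.iterate_succ_apply' (um a) n w) ▸ h
      have h2 : um (a ^ k) ((um a)^[n] w) ∈ V := g.upow H a h1 k
      have h3 : (um a)^[n] (um (a ^ k) w) ∈ V := by
        rw [iter_um_comm H a hN hab k hw n]; exact h2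
      have h4 := ih (um_mem H hN _ hw) h3
      rw [Function.iterate_succ_apply]; exact h4

end withab2


section seqs
variable (hN : H.Normal) (hab : ∀ h₁ ∈ H, ∀ h₂ ∈ H, h₁ * h₂ = h₂ * h₁)
include hN hab

omit hN in
lemma um_on_H {h y : G} (hh : h ∈ H) (hy : y ∈ H) (k : ℤ) :
    um (h * a ^ k) y = um (a ^ k) y := by
  have e : h⁻¹ * (y * h) = y := by rw [hab y hy h hh]; group
  have e2 : um (h * a ^ k) y = y⁻¹ * (a ^ k)⁻¹ * (h⁻¹ * (y * h)) * a ^ k := by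
    simp [um]; group
  rw [e2, e]; rfl

lemma wbase_mem {h : G} (hh : h ∈ H) (k : ℤ) :
    (a ^ k)⁻¹ * (um a h)⁻¹ * a ^ k ∈ H :=
  conj_mem' H hN (inv_mem (um_mem H hN a hh)) (a ^ k)

lemma rcomm_formula {h : G} (hh : h ∈ H) (k : ℤ) (n : ℕ) :
    rcomm a (h * a ^ k) (n+1)
      = (um (a ^ k))^[n] ((a ^ k)⁻¹ * (um a h)⁻¹ * a ^ k) := by
  induction n with
  | zero =>
      rw [rcomm_eq_iter, Function.iterate_one, Function.iterate_zero_apply]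
      show um (h * a ^ k) a = _
      simp [um]; group
  | succ n ih =>
      rw [rcomm_eq_iter] at ih ⊢
      rw [Function.iterate_succ_apply' (um (h * a ^ k)) (n+1), ih,
        um_on_H H a hab hh (iter_um_mem H hN (a ^ k) (wbase_mem H a hN hab hh k) n) k,
        Function.iterate_succ_apply' (um (a ^ k)) n]

lemma rcomm_ha {h : G} (hh : h ∈ H) (n : ℕ) :
    rcomm a (h * a) (n+1) = a⁻¹ * ((um a)^[n+1] h)⁻¹ * a := by
  have e := rcomm_formula H a hN hab hh 1 n
  simp only [zpow_one] at e
  rw [e, iter_um_conj_a, iter_um_inv H hN hab a (um_mem H hN a hh),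
    Function.iterate_succ_apply]

end seqs

/-- The set of infinitely-recurring values of the sequences `[h, a, a, ..., a]`, `h ∈ H`. -/
def sset : Set G := {y | ∃ h ∈ H, {n : ℕ | (um a)^[n] h = y}.Infinite}

lemma per {f : G → G} {h y : G} (hA : {n : ℕ | f^[n] h = y}.Infinite) :
    ∃ m, 1 ≤ m ∧ f^[m] y = y ∧ ∀ n, f^[n] h = y → f^[n+m] h = y := by
  obtain ⟨n₀, hn₀⟩ := hA.nonempty
  obtain ⟨n₁, hn₁, hlt⟩ := hA.exists_gt n₀
  have hfix : f^[n₁ - n₀] y = y := by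
    have e : f^[(n₁ - n₀) + n₀] h = y := by
      rw [show (n₁ - n₀) + n₀ = n₁ from by omega]; exact hn₁
    rw [Function.iterate_add_apply, hn₀] at e; exact e
  refine ⟨n₁ - n₀, by omega, hfix, fun n hn => ?_⟩
  rw [show n + (n₁ - n₀) = (n₁ - n₀) + n from by omega, Function.iterate_add_apply, hn, hfix]

section ssetsec
variable (hN : H.Normal) (hab : ∀ h₁ ∈ H, ∀ h₂ ∈ H, h₁ * h₂ = h₂ * h₁)
include hN hab

lemma sset_mul {y y' : G} (hy : y ∈ sset H a) (hy' : y' ∈ sset H a) :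
    y * y' ∈ sset H a := by
  obtain ⟨h, hh, hA⟩ := hy
  obtain ⟨h', hh', hA'⟩ := hy'
  obtain ⟨m, hm1, hfix, hstep⟩ := per hA
  obtain ⟨m', hm1', hfix', hstep'⟩ := per hA'
  set M := m * m' with hM
  have hMpos : 0 < M := Nat.mul_pos hm1 hm1'
  have hMstep : ∀ n, (um a)^[n] h = y → (um a)^[n + M] h = y := by
    intro n hn
    have : ∀ j, (um a)^[n + j * m] h = y := by
      intro j; induction j with
      | zero => simpa using hn
      | succ j ih =>
          rw [show n + (j+1) * m = (n + j * m) + m from by ring]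
          exact hstep _ ih
    have e := this m'
    rw [show n + m' * m = n + M from by rw [hM]; ring] at e
    exact e
  have hMstep' : ∀ n, (um a)^[n] h' = y' → (um a)^[n + M] h' = y' := by
    intro n hn
    have : ∀ j, (um a)^[n + j * m'] h' = y' := by
      intro j; induction j with
      | zero => simpa using hn
      | succ j ih =>
          rw [show n + (j+1) * m' = (n + j * m') + m' from by ring]
          exact hstep' _ ih
    have e := this m
    rw [show n + m * m' = n + M from by rw [hM]] at e
    exact e
  obtain ⟨n₀, hn₀⟩ := hA.nonempty
  obtain ⟨n₁, hn₁, hlt⟩ := hA'.exists_gt n₀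
  set d := n₁ - n₀ with hd
  have hAall : ∀ j : ℕ, (um a)^[n₀ + j * M] h = y := by
    intro j; induction j with
    | zero => simpa using hn₀
    | succ j ih =>
        rw [show n₀ + (j+1) * M = (n₀ + j * M) + M from by ring]
        exact hMstep _ ih
  have hAall' : ∀ j : ℕ, (um a)^[n₁ + j * M] h' = y' := by
    intro j; induction j with
    | zero => simpa using hn₁
    | succ j ih =>
        rw [show n₁ + (j+1) * M = (n₁ + j * M) + M from by ring]
        exact hMstep' _ ih
  refine ⟨h * (um a)^[d] h', mul_mem hh (iter_um_mem H hN a hh' d), ?_⟩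
  apply Set.infinite_of_injective_forall_mem (f := fun j : ℕ => n₀ + j * M)
  · intro j j' hjj'
    simp only at hjj'
    have : j * M = j' * M := by omega
    exact Nat.eq_of_mul_eq_mul_right hMpos this
  · intro j
    show (um a)^[n₀ + j * M] (h * (um a)^[d] h') = y * y'
    rw [iter_um_mul H hN hab a hh (iter_um_mem H hN a hh' d),
      ← Function.iterate_add_apply, hAall j,
      show n₀ + j * M + d = n₁ + j * M from by omega, hAall' j]

lemma sset_good : Good H a (sset H a) := by
  refine ⟨?_, ?_, ?_, ?_, ?_, ?_⟩
  · rintro y ⟨h, hh, hA⟩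
    obtain ⟨n, hn⟩ := hA.nonempty
    exact hn ▸ iter_um_mem H hN a hh n
  · refine ⟨1, one_mem _, ?_⟩
    have e : {n : ℕ | (um a)^[n] (1:G) = 1} = Set.univ := by
      ext n; simp [iter_um_one]
    rw [e]; exact Set.infinite_univ
  · intro u hu v hv; exact sset_mul H a hN hab hu hv
  · rintro v ⟨h, hh, hA⟩
    refine ⟨h⁻¹, inv_mem hh, hA.mono ?_⟩
    intro n hn
    show (um a)^[n] h⁻¹ = v⁻¹
    rw [iter_um_inv H hN hab a hh, hn]
  · rintro v ⟨h, hh, hA⟩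
    refine ⟨a⁻¹ * h * a, conj_mem' H hN hh a, hA.mono ?_⟩
    intro n hn
    show (um a)^[n] (a⁻¹ * h * a) = a⁻¹ * v * a
    rw [iter_um_conj_a, hn]
  · rintro v ⟨h, hh, hA⟩
    have hmem : a * h * a⁻¹ ∈ H := by simpa using hN.conj_mem h hh a
    refine ⟨a * h * a⁻¹, hmem, hA.mono ?_⟩
    intro n hn
    show (um a)^[n] (a * h * a⁻¹) = a * v * a⁻¹
    rw [iter_um_conj_a', hn]

end ssetsec

section traps
variable (hN : H.Normal) (hab : ∀ h₁ ∈ H, ∀ h₂ ∈ H, h₁ * h₂ = h₂ * h₁)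
include hN hab

omit hN hab in
lemma trap {F : Set G} (hF : F.Finite) {h : G} (hh : h ∈ H)
    (hev : ∃ N, ∀ n ≥ N, (um a)^[n] h ∈ F) :
    ∃ N, ∀ n ≥ N, (um a)^[n] h ∈ sset H a := by
  obtain ⟨N, hNe⟩ := hev
  have hBad : (⋃ y ∈ {y ∈ F | {n : ℕ | (um a)^[n] h = y}.Finite},
      {n : ℕ | (um a)^[n] h = y}).Finite :=
    Set.Finite.biUnion (hF.subset (Set.sep_subset _ _)) (fun y hy => hy.2)
  obtain ⟨B, hB⟩ := hBad.bddAbove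
  refine ⟨max N (B + 1), fun n hn => ?_⟩
  have h1 : (um a)^[n] h ∈ F := hNe n (le_trans (le_max_left _ _) hn)
  by_cases hfin : {m : ℕ | (um a)^[m] h = (um a)^[n] h}.Finite
  · exfalso
    have hnB : n ∈ ⋃ y ∈ {y ∈ F | {n : ℕ | (um a)^[n] h = y}.Finite},
        {n : ℕ | (um a)^[n] h = y} := by
      refine Set.mem_biUnion ⟨h1, hfin⟩ rfl
    have := hB hnB
    have := le_trans (le_max_right N (B+1)) hn
    omega
  · exact ⟨h, hh, hfin⟩

omit hN hab in
lemma sset_subset {F : Set G}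
    (hev : ∀ h ∈ H, ∃ N, ∀ n ≥ N, (um a)^[n] h ∈ F) :
    sset H a ⊆ F := by
  rintro y ⟨h, hh, hA⟩
  obtain ⟨N, hNe⟩ := hev h hh
  obtain ⟨n, hn, hlt⟩ := hA.exists_gt N
  exact hn ▸ hNe n (le_of_lt hlt)

omit hab in
lemma decomp (hgen : H ⊔ Subgroup.zpowers a = ⊤) (x : G) :
    ∃ h ∈ H, ∃ k : ℤ, x = h * a ^ k := by
  haveI := hN
  have hx : x ∈ ((H : Set G) * (Subgroup.zpowers a : Set G)) := by
    rw [← Subgroup.normal_mul, hgen]; trivial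
  obtain ⟨h, hh, z, hz, hxe⟩ := hx
  obtain ⟨k, hk⟩ := Subgroup.mem_zpowers_iff.mp hz
  exact ⟨h, hh, k, by rw [← hxe, ← hk]⟩

lemma leftSink_of_C {V : Set G} (g : Good H a V)
    (hgen : H ⊔ Subgroup.zpowers a = ⊤)
    (hC : ∀ h ∈ H, ∃ N, ∀ n ≥ N, (um a)^[n] h ∈ V) :
    IsLeftEngelSink V a := by
  intro x
  obtain ⟨h, hh, k, rfl⟩ := decomp H a hN hgen x
  obtain ⟨N, hNe⟩ := hC h hh
  refine ⟨N + 1, fun n hn => ?_⟩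
  obtain ⟨m, rfl⟩ : ∃ m, n = m + 1 := ⟨n - 1, by omega⟩
  rw [lcomm_eq_iter, decomp_iter]
  exact Good.cpow H a g (hNe (m+1) (by omega)) k

lemma rightSink_of_C {V : Set G} (g : Good H a V)
    (hgen : H ⊔ Subgroup.zpowers a = ⊤)
    (hC : ∀ h ∈ H, ∃ N, ∀ n ≥ N, (um a)^[n] h ∈ V) :
    IsRightEngelSink V a := by
  intro x
  obtain ⟨h, hh, k, rfl⟩ := decomp H a hN hgen x
  obtain ⟨N, hNe⟩ := hC _ (wbase_mem H a hN hab hh k)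
  refine ⟨N + 1, fun n hn => ?_⟩
  obtain ⟨m, rfl⟩ : ∃ m, n = m + 1 := ⟨n - 1, by omega⟩
  rw [rcomm_formula H a hN hab hh k m]
  exact key H a hN hab g k m (wbase_mem H a hN hab hh k) (hNe m (by omega))

omit hN hab in
lemma C_of_leftSink {V : Set G} (hV : IsLeftEngelSink V a) :
    ∀ h ∈ H, ∃ N, ∀ n ≥ N, (um a)^[n] h ∈ V := by
  intro h _
  obtain ⟨N, hNe⟩ := hV h
  exact ⟨N, fun n hn => (lcomm_eq_iter h a n) ▸ hNe n hn⟩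

lemma ev_of_rightSink {V : Set G} (hV : IsRightEngelSink V a) :
    ∀ h ∈ H, ∃ N, ∀ n ≥ N, (um a)^[n] h ∈ (fun r => (a * r * a⁻¹)⁻¹) '' V := by
  intro h hh
  obtain ⟨N, hNe⟩ := hV (h * a)
  refine ⟨N + 1, fun n hn => ?_⟩
  obtain ⟨m, rfl⟩ : ∃ m, n = m + 1 := ⟨n - 1, by omega⟩
  have hr := hNe (m+1) (by omega)
  rw [rcomm_ha H a hN hab hh m] at hr
  refine ⟨a⁻¹ * ((um a)^[m+1] h)⁻¹ * a, hr, ?_⟩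
  group

end traps

/-- Infinitely recurring values of left Engel sequences. -/
def vl : Set G := {y | ∃ x : G, {n : ℕ | lcomm x a n = y}.Infinite}

/-- Infinitely recurring values of right Engel sequences. -/
def vr : Set G := {y | ∃ x : G, {n : ℕ | rcomm a x n = y}.Infinite}

lemma minLeft_eq_vl {L : Set G} (hL : IsMinLeftEngelSink L a) : L = vl a := by
  apply Set.Subset.antisymm
  · intro p hp
    by_contra hnp
    have hsink : IsLeftEngelSink (L \ {p}) a := by
      intro x
      obtain ⟨N, hNe⟩ := hL.1 x
      have hfin : {n : ℕ | lcomm x a n = p}.Finite := by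
        by_contra hinf
        exact hnp ⟨x, hinf⟩
      obtain ⟨B, hB⟩ := hfin.bddAbove
      refine ⟨max N (B+1), fun n hn => Set.mem_diff_singleton.mpr
        ⟨hNe n (le_trans (le_max_left _ _) hn), fun hmem => ?_⟩⟩
      have h1 : n ≤ B := hB hmem
      have h2 := le_trans (le_max_right N (B+1)) hn
      omega
    exact (hL.2 _ hsink hp).2 rfl
  · rintro y ⟨x, hA⟩
    obtain ⟨N, hNe⟩ := hL.1 x
    obtain ⟨n, hn, hlt⟩ := hA.exists_gt N
    exact hn ▸ hNe n (le_of_lt hlt)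

lemma minRight_eq_vr {R : Set G} (hR : IsMinRightEngelSink R a) : R = vr a := by
  apply Set.Subset.antisymm
  · intro p hp
    by_contra hnp
    have hsink : IsRightEngelSink (R \ {p}) a := by
      intro x
      obtain ⟨N, hNe⟩ := hR.1 x
      have hfin : {n : ℕ | rcomm a x n = p}.Finite := by
        by_contra hinf
        exact hnp ⟨x, hinf⟩
      obtain ⟨B, hB⟩ := hfin.bddAbove
      refine ⟨max N (B+1), fun n hn => Set.mem_diff_singleton.mpr
        ⟨hNe n (le_trans (le_max_left _ _) hn), fun hmem => ?_⟩⟩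
      have h1 : n ≤ B := hB hmem
      have h2 := le_trans (le_max_right N (B+1)) hn
      omega
    exact (hR.2 _ hsink hp).2 rfl
  · rintro y ⟨x, hA⟩
    obtain ⟨N, hNe⟩ := hR.1 x
    obtain ⟨n, hn, hlt⟩ := hA.exists_gt N
    exact hn ▸ hNe n (le_of_lt hlt)

section vsec
variable (hN : H.Normal) (hab : ∀ h₁ ∈ H, ∀ h₂ ∈ H, h₁ * h₂ = h₂ * h₁)
  (hgen : H ⊔ Subgroup.zpowers a = ⊤)
include hN hab hgen

lemma vl_eq_sset : vl a = sset H a := by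
  apply Set.Subset.antisymm
  · rintro y ⟨x, hA⟩
    obtain ⟨h, hh, k, rfl⟩ := decomp H a hN hgen x
    have hA' := hA.diff (Set.finite_singleton 0)
    have hsub : ({n : ℕ | lcomm (h * a ^ k) a n = y} \ {0})
        ⊆ {n : ℕ | (um a)^[n] h = a ^ k * y * (a ^ k)⁻¹} := by
      rintro n ⟨hn, hn0⟩
      obtain ⟨m, rfl⟩ : ∃ m, n = m + 1 :=
        ⟨n - 1, by simp only [Set.mem_singleton_iff] at hn0; omega⟩
      have e : lcomm (h * a ^ k) a (m+1) = y := hn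
      rw [lcomm_eq_iter, decomp_iter] at e
      show (um a)^[m+1] h = a ^ k * y * (a ^ k)⁻¹
      rw [← e]; group
    have hz : a ^ k * y * (a ^ k)⁻¹ ∈ sset H a := ⟨h, hh, hA'.mono hsub⟩
    have hm := Good.cpow H a (sset_good H a hN hab) hz k
    have e2 : (a ^ k)⁻¹ * (a ^ k * y * (a ^ k)⁻¹) * a ^ k = y := by group
    rw [e2] at hm
    exact hm
  · rintro y ⟨h, hh, hA⟩
    refine ⟨h, hA.mono fun n hn => ?_⟩
    show lcomm h a n = y
    rw [lcomm_eq_iter]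
    exact hn

lemma vr_eq_sset (hsink : IsLeftEngelSink (sset H a) a) : vr a = sset H a := by
  apply Set.Subset.antisymm
  · rintro y ⟨x, hA⟩
    obtain ⟨h, hh, k, rfl⟩ := decomp H a hN hgen x
    have hw : (a ^ k)⁻¹ * (um a h)⁻¹ * a ^ k ∈ H := wbase_mem H a hN hab hh k
    obtain ⟨N, hNe⟩ := C_of_leftSink H a hsink _ hw
    obtain ⟨n, hn, hlt⟩ := hA.exists_gt (N + 1)
    obtain ⟨m, rfl⟩ : ∃ m, n = m + 1 := ⟨n - 1, by omega⟩
    have e : rcomm a (h * a ^ k) (m+1) = y := hn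
    rw [rcomm_formula H a hN hab hh k m] at e
    rw [← e]
    exact key H a hN hab (sset_good H a hN hab) k m hw (hNe m (by omega))
  · rintro y hy
    have g := sset_good H a hN hab
    have hz : a * y⁻¹ * a⁻¹ ∈ sset H a := g.cup _ (g.inv_mem _ hy)
    obtain ⟨h'', hh'', hA''⟩ := hz
    refine ⟨h'' * a, ?_⟩
    have hsub : ({n : ℕ | (um a)^[n] h'' = a * y⁻¹ * a⁻¹} \ {0})
        ⊆ {n : ℕ | rcomm a (h'' * a) n = y} := by
      rintro n ⟨hn, hn0⟩
      obtain ⟨m, rfl⟩ : ∃ m, n = m + 1 :=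
        ⟨n - 1, by simp only [Set.mem_singleton_iff] at hn0; omega⟩
      show rcomm a (h'' * a) (m+1) = y
      rw [rcomm_ha H a hN hab hh'' m]
      have e : (um a)^[m+1] h'' = a * y⁻¹ * a⁻¹ := hn
      rw [e]; group
    exact (hA''.diff (Set.finite_singleton 0)).mono hsub

end vsec

end Stmt7


theorem stmt7 {G : Type*} [Group G] (H : Subgroup G) (hN : H.Normal)
    (hab : ∀ h₁ ∈ H, ∀ h₂ ∈ H, h₁ * h₂ = h₂ * h₁)
    (a : G) (hgen : H ⊔ Subgroup.zpowers a = ⊤) :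
    ((∃ R : Set G, R.Finite ∧ IsRightEngelSink R a) ↔
        (∃ L : Set G, L.Finite ∧ IsLeftEngelSink L a)) ∧
      (∀ R L : Set G, IsMinRightEngelSink R a → IsMinLeftEngelSink L a → R = L) := by

  classical
  have g := Stmt7.sset_good H a hN hab
  constructor
  · constructor
    · rintro ⟨R, hRfin, hRsink⟩
      have hev := Stmt7.ev_of_rightSink H a hN hab hRsink
      have hC : ∀ h ∈ H, ∃ N, ∀ n ≥ N, (Stmt7.um a)^[n] h ∈ Stmt7.sset H a :=
        fun h hh => Stmt7.trap H a (hRfin.image _) hh (hev h hh)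
      exact ⟨Stmt7.sset H a, (hRfin.image _).subset (Stmt7.sset_subset H a hev),
        Stmt7.leftSink_of_C H a hN hab g hgen hC⟩
    · rintro ⟨L, hLfin, hLsink⟩
      have hev := Stmt7.C_of_leftSink H a hLsink
      have hC : ∀ h ∈ H, ∃ N, ∀ n ≥ N, (Stmt7.um a)^[n] h ∈ Stmt7.sset H a :=
        fun h hh => Stmt7.trap H a hLfin hh (hev h hh)
      exact ⟨Stmt7.sset H a, hLfin.subset (Stmt7.sset_subset H a hev),
        Stmt7.rightSink_of_C H a hN hab g hgen hC⟩
  · intro R L hR hL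
    have hLeq : L = Stmt7.vl a := Stmt7.minLeft_eq_vl a hL
    have hvl : Stmt7.vl a = Stmt7.sset H a := Stmt7.vl_eq_sset H a hN hab hgen
    have hsink : IsLeftEngelSink (Stmt7.sset H a) a := by
      rw [← hvl, ← hLeq]; exact hL.1
    have hReq : R = Stmt7.vr a := Stmt7.minRight_eq_vr a hR
    have hvr : Stmt7.vr a = Stmt7.sset H a := Stmt7.vr_eq_sset H a hN hab hgen hsink
    rw [hLeq, hReq, hvl, hvr]
end

section
/- Let G be a finite group and a ∈ G with gcd(|a|, |G : ⟨a⟩|) appropriately coprime — specifically, G = H⟨a⟩ with H normal and gcd(|a|,|H|) = 1. If the minimal right Engel sink of a is trivial (R(a) = {1}), then [H, a] = 1, i.e. a centralizes H. -/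
section EngelAux

variable {G : Type*} [Group G]

/-- Heineken-type identity: the left Engel iterates with `a⁻¹` are conjugates of
right Engel iterates of `a`. -/
theorem lcomm_eq_conj_rcomm (a x : G) (n : ℕ) :
    lcomm x a⁻¹ (n+2) = (x*a⁻¹)⁻¹ * rcomm a (x*a⁻¹*x⁻¹) (n+1) * (x*a⁻¹) := by
  induction n with
  | zero => simp only [lcomm, rcomm]; group
  | succ n ih =>
      show (lcomm x a⁻¹ (n+2))⁻¹ * (a⁻¹)⁻¹ * (lcomm x a⁻¹ (n+2)) * a⁻¹ = _
      rw [ih]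
      show _ = (x*a⁻¹)⁻¹ * ((rcomm a (x*a⁻¹*x⁻¹) (n+1))⁻¹ * (x*a⁻¹*x⁻¹)⁻¹ *
        (rcomm a (x*a⁻¹*x⁻¹) (n+1)) * (x*a⁻¹*x⁻¹)) * (x*a⁻¹)
      generalize rcomm a (x*a⁻¹*x⁻¹) (n+1) = c
      group

theorem lcomm_shift (x g : G) (n : ℕ) :
    lcomm x g (n+1) = lcomm (x⁻¹ * g⁻¹ * x * g) g n := by
  induction n with
  | zero => rfl
  | succ n ih =>
      show (lcomm x g (n+1))⁻¹ * g⁻¹ * (lcomm x g (n+1)) * g = _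
      rw [ih]; rfl

theorem lcomm_mem (H : Subgroup G) (hN : H.Normal) (g : G) {x : G} (hx : x ∈ H) :
    ∀ n, lcomm x g n ∈ H := by
  intro n
  induction n with
  | zero => exact hx
  | succ n ih =>
      show (lcomm x g n)⁻¹ * g⁻¹ * (lcomm x g n) * g ∈ H
      have h1 : g⁻¹ * (lcomm x g n) * g ∈ H := by
        simpa using hN.conj_mem _ ih g⁻¹
      simpa [mul_assoc] using H.mul_mem (H.inv_mem ih) h1

end EngelAux

theorem stmt9 {G : Type*} [Group G] [Finite G] (H : Subgroup G) (hN : H.Normal)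
    (a : G) (hgen : H ⊔ Subgroup.zpowers a = ⊤)
    (hcop : Nat.Coprime (orderOf a) (Nat.card H))
    (R : Set G) (hR : IsMinRightEngelSink R a) (htriv : R = {1}) :
    commSub H a = ⊥ ∧ ∀ h ∈ H, a * h = h * a := by
  obtain ⟨hsink, -⟩ := hR
  subst htriv
  -- a⁻¹ is a left Engel element: for every x, lcomm x a⁻¹ n = 1 eventually
  have hleft : ∀ x : G, ∃ N : ℕ, ∀ n ≥ N, lcomm x a⁻¹ n = 1 := by
    intro x
    obtain ⟨N, hNx⟩ := hsink (x*a⁻¹*x⁻¹)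
    refine ⟨N + 2, ?_⟩
    intro n hn
    obtain ⟨m, rfl⟩ : ∃ m, n = m + 2 := ⟨n - 2, by omega⟩
    rw [lcomm_eq_conj_rcomm]
    have : rcomm a (x*a⁻¹*x⁻¹) (m+1) = 1 := hNx (m+1) (by omega)
    rw [this]; group
  -- the core coprime descent step
  have hcore : ∀ z ∈ H, lcomm z a⁻¹ 2 = 1 → z⁻¹ * a * z * a⁻¹ = 1 := by
    intro z hz h2
    set y : G := z⁻¹ * a * z * a⁻¹ with hy_def
    have hyH : y ∈ H := by
      have := lcomm_mem H hN a⁻¹ hz 1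
      simpa [lcomm] using this
    have h2' : y⁻¹ * a * y * a⁻¹ = 1 := by
      have : lcomm z a⁻¹ 2 = y⁻¹ * a * y * a⁻¹ := by
        simp only [lcomm, hy_def]; group
      rw [← this, h2]
    have hay : a * y = y * a := by
      calc a * y = y * (y⁻¹ * a * y * a⁻¹) * a := by group
        _ = y * 1 * a := by rw [h2']
        _ = y * a := by group
    have haz : a * z = z * y * a := by
      have : z * y = a * z * a⁻¹ := by rw [hy_def]; group
      calc a * z = (a * z * a⁻¹) * a := by group
        _ = z * y * a := by rw [← this]
    have hayk : ∀ k : ℕ, a * y ^ k = y ^ k * a :=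
      fun k => ((Commute.pow_right (hay : Commute a y) k) : _)
    have hk : ∀ k : ℕ, a ^ k * z = z * y ^ k * a ^ k := by
      intro k
      induction k with
      | zero => simp
      | succ k ih =>
          have hayk : a * y ^ k = y ^ k * a := hayk k
          calc a ^ (k+1) * z = a * (a ^ k * z) := by rw [pow_succ']; group
            _ = a * (z * y ^ k * a ^ k) := by rw [ih]
            _ = (a * z) * y ^ k * a ^ k := by group
            _ = z * y * (a * y ^ k) * a ^ k := by rw [haz]; group
            _ = z * y * (y ^ k * a) * a ^ k := by rw [hayk]
            _ = z * y ^ (k+1) * a ^ (k+1) := by rw [pow_succ, pow_succ']; group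
    have hyord : y ^ orderOf a = 1 := by
      have := hk (orderOf a)
      rw [pow_orderOf_eq_one] at this
      have h' : z = z * y ^ orderOf a := by simpa using this
      have := mul_left_cancel (a := z) (b := (1:G)) (c := y ^ orderOf a)
        (by simpa using h'.symm)
      exact this.symm
    have hdvd1 : orderOf y ∣ orderOf a := orderOf_dvd_of_pow_eq_one hyord
    have hdvd2 : orderOf y ∣ Nat.card H := by
      have : orderOf (⟨y, hyH⟩ : H) ∣ Nat.card H := orderOf_dvd_natCard _
      simpa [Subgroup.orderOf_mk] using this
    have : orderOf y = 1 := Nat.eq_one_of_dvd_coprimes hcop hdvd1 hdvd2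
    have hy1 : y = 1 := orderOf_eq_one_iff.mp this
    rw [hy_def] at hy1; exact hy1
  -- descent: any Engel length forces commuting
  have hdesc : ∀ n : ℕ, ∀ z ∈ H, lcomm z a⁻¹ n = 1 → z⁻¹ * a * z * a⁻¹ = 1 := by
    intro n
    induction n with
    | zero =>
        intro z hz h0
        have : z = 1 := h0
        rw [this]; group
    | succ n ih =>
        intro z hz h1
        cases n with
        | zero => simpa [lcomm] using h1
        | succ n =>
            have hmem : z⁻¹ * a * z * a⁻¹ ∈ H := by
              have := lcomm_mem H hN a⁻¹ hz 1
              simpa [lcomm] using this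
            have h2 : lcomm (z⁻¹ * (a⁻¹)⁻¹ * z * a⁻¹) a⁻¹ (n+1) = 1 := by
              rw [← lcomm_shift]; exact h1
            rw [inv_inv] at h2
            have hff := ih _ hmem h2
            -- hff : f (f z) = 1, i.e. lcomm z a⁻¹ 2 = 1
            apply hcore z hz
            have hlc : lcomm z a⁻¹ 2 =
                (z⁻¹ * a * z * a⁻¹)⁻¹ * a * (z⁻¹ * a * z * a⁻¹) * a⁻¹ := by
              simp only [lcomm]; group
            rw [hlc, hff]
  -- conclude commuting for every h ∈ H
  have hcomm : ∀ h ∈ H, a * h = h * a := by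
    intro h hh
    obtain ⟨N, hNh⟩ := hleft h
    have := hdesc N h hh (hNh N le_rfl)
    have h' : a * h = h * (h⁻¹ * a * h * a⁻¹) * a := by group
    rw [this] at h'
    simpa using h'
  refine ⟨?_, hcomm⟩
  rw [commSub, eq_bot_iff]
  refine (Subgroup.closure_le _).2 ?_
  rintro z ⟨h, hh, rfl⟩
  have := hcomm h hh
  simp only [SetLike.mem_coe, Subgroup.mem_bot]
  calc h⁻¹ * (a⁻¹ * h * a) = h⁻¹ * a⁻¹ * (h * a) := by group
    _ = h⁻¹ * a⁻¹ * (a * h) := by rw [this]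
    _ = 1 := by group
end

section
/- Let G be a locally finite group whose Sylow 2-subgroups are finite, and suppose every 2-element g ∈ G has a finite right Engel sink. Then G has a finite normal subgroup N such that G/N has no nontrivial 2-elements (every element of G/N has odd order). -/
section EngelAux

open Subgroup Pointwise

section Aux

open Subgroup

variable {G : Type*} {H : Type*} [Group G] [Group H]

/-- abbreviation for the hypotheses -/
def Is2Elt {G : Type*} [Group G] (g : G) : Prop := ∃ k : ℕ, g ^ (2 ^ k) = 1

def LFHyp (G : Type*) [Group G] : Prop :=
  ∀ S : Finset G, Finite (Subgroup.closure (S : Set G))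

def SinkHyp (G : Type*) [Group G] : Prop :=
  ∀ g : G, Is2Elt g → ∃ R : Set G, R.Finite ∧ IsRightEngelSink R g

def BddHyp (G : Type*) [Group G] (e : ℕ) : Prop :=
  ∀ K : Subgroup G, IsPGroup 2 K → Finite K ∧ Nat.card K ∣ 2 ^ e

lemma lf_set (hlf : LFHyp G) {s : Set G} (hs : s.Finite) :
    Finite (Subgroup.closure s) := by
  have := hlf hs.toFinset
  rwa [Set.Finite.coe_toFinset] at this

lemma lf_zpowers (hlf : LFHyp G) (g : G) : Finite (zpowers g) := by
  rw [Subgroup.zpowers_eq_closure]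
  exact lf_set hlf (Set.finite_singleton g)

lemma lf_orderOf (hlf : LFHyp G) (g : G) : orderOf g ≠ 0 := by
  have : Finite (zpowers g) := lf_zpowers hlf g
  rw [← Nat.card_zpowers]
  exact Nat.card_pos.ne'

lemma rcomm_map (f : G →* H) (g x : G) (n : ℕ) :
    f (rcomm g x n) = rcomm (f g) (f x) n := by
  induction n with
  | zero => rfl
  | succ n ih => simp [rcomm, ih]

lemma Is2Elt.map (f : G →* H) {g : G} (hg : Is2Elt g) : Is2Elt (f g) := by
  obtain ⟨k, hk⟩ := hg
  exact ⟨k, by rw [← map_pow, hk, map_one]⟩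

lemma is2Elt_coe_iff {K : Subgroup G} (g : K) : Is2Elt (g : G) ↔ Is2Elt g := by
  constructor
  · rintro ⟨k, hk⟩
    exact ⟨k, by ext; simpa using hk⟩
  · rintro ⟨k, hk⟩
    exact ⟨k, by simpa using congrArg (Subtype.val) hk⟩

lemma sink_subgroup {K : Subgroup G} {R : Set G} {g : K}
    (hR : IsRightEngelSink R (g : G)) :
    IsRightEngelSink ((↑·) ⁻¹' R : Set K) g := by
  intro x
  obtain ⟨N, hN⟩ := hR x
  refine ⟨N, fun n hn => ?_⟩
  have : ((rcomm g x n : K) : G) = rcomm (g : G) (x : G) n := rcomm_map K.subtype g x n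
  simp only [Set.mem_preimage, this]
  exact hN n hn

lemma sink_map {R : Set G} {g : G} (f : G →* H) (hf : Function.Surjective f)
    (hR : IsRightEngelSink R g) : IsRightEngelSink (f '' R) (f g) := by
  intro x
  obtain ⟨x₀, rfl⟩ := hf x
  obtain ⟨N, hN⟩ := hR x₀
  exact ⟨N, fun n hn => ⟨rcomm g x₀ n, hN n hn, rcomm_map f g x₀ n⟩⟩

lemma finite_subgroup_map (f : G →* H) (K : Subgroup G) [Finite K] :
    Finite (K.map f) := by
  have : Function.Surjective (fun x : K => (⟨f x, Subgroup.mem_map.2 ⟨x, x.2, rfl⟩⟩ : K.map f)) := by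
    rintro ⟨y, hy⟩
    obtain ⟨x, hx, rfl⟩ := Subgroup.mem_map.1 hy
    exact ⟨⟨x, hx⟩, rfl⟩
  exact Finite.of_surjective _ this

lemma card_subgroup_map_of_injective (f : G →* H) (hf : Function.Injective f) (K : Subgroup G) :
    Nat.card (K.map f) = Nat.card K :=
  (Nat.card_congr (Subgroup.equivMapOfInjective K f hf).toEquiv).symm

lemma lfhyp_subgroup (hlf : LFHyp G) (K : Subgroup G) : LFHyp K := by
  intro S
  have h1 : Finite (Subgroup.closure ((K.subtype '' (S : Set K)))) :=
    lf_set hlf ((S.finite_toSet).image _)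
  rw [← MonoidHom.map_closure] at h1
  have := Subgroup.equivMapOfInjective (Subgroup.closure (S : Set K)) K.subtype
    K.subtype_injective
  exact Finite.of_equiv _ this.toEquiv.symm

lemma lfhyp_surjective (hlf : LFHyp G) (f : G →* H) (hf : Function.Surjective f) : LFHyp H := by
  intro S
  have : ∀ y : H, ∃ x : G, f x = y := hf
  choose sec hsec using this
  have himg : f '' (sec '' (S : Set H)) = (S : Set H) := by
    ext y; constructor
    · rintro ⟨x, ⟨z, hz, rfl⟩, rfl⟩; rwa [hsec]
    · intro hy; exact ⟨sec y, ⟨y, hy, rfl⟩, hsec y⟩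
  have h1 : Finite ((Subgroup.closure (sec '' (S : Set H))).map f) :=
    have := lf_set hlf ((S.finite_toSet).image sec)
    finite_subgroup_map f _
  rwa [MonoidHom.map_closure, himg] at h1

end Aux

section MoreAux
variable {G : Type*} {H : Type*} [Group G] [Group H]


lemma exists_involution {z : G} (h2 : ∃ k : ℕ, z ^ (2:ℕ) ^ k = 1) (hz : z ≠ 1) :
    ∃ t ∈ zpowers z, t * t = 1 ∧ t ≠ 1 := by
  obtain ⟨k, hk⟩ := h2
  have hdvd : orderOf z ∣ 2 ^ k := orderOf_dvd_of_pow_eq_one hk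
  obtain ⟨m, hm, hord⟩ := (Nat.dvd_prime_pow Nat.prime_two).1 hdvd
  have hm1 : m ≠ 0 := by
    rintro rfl
    rw [pow_zero] at hord
    exact hz (orderOf_eq_one_iff.1 hord)
  refine ⟨z ^ 2 ^ (m - 1), npow_mem_zpowers _ _, ?_, ?_⟩
  · have : 2 ^ (m - 1) + 2 ^ (m - 1) = 2 ^ m := by
      have : m - 1 + 1 = m := Nat.succ_pred_eq_of_pos (Nat.pos_of_ne_zero hm1)
      have h2 : 2 ^ (m - 1 + 1) = 2 ^ (m - 1) * 2 := pow_succ 2 (m - 1)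
      rw [this] at h2
      omega
    rw [← pow_add, this, ← hord, pow_orderOf_eq_one]
  · intro h1
    have := orderOf_dvd_of_pow_eq_one h1
    rw [hord] at this
    have hle := Nat.le_of_dvd (Nat.pow_pos (by norm_num)) this
    have : 2 ^ (m - 1) < 2 ^ m := Nat.pow_lt_pow_right (by norm_num) (Nat.pred_lt hm1)
    omega

lemma rcomm_zero (g x : G) : rcomm g x 0 = g := rfl
lemma rcomm_succ (g x : G) (n : ℕ) :
    rcomm g x (n + 1) = (rcomm g x n)⁻¹ * x⁻¹ * (rcomm g x n) * x := rfl

lemma preimage_mk_finite {N : Subgroup G} [N.Normal] (hN : Finite N) {S : Set (G ⧸ N)}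
    (hS : S.Finite) : ((QuotientGroup.mk : G → G ⧸ N) ⁻¹' S).Finite := by
  have hrw : (QuotientGroup.mk : G → G ⧸ N) ⁻¹' S
      = ⋃ y ∈ S, (QuotientGroup.mk : G → G ⧸ N) ⁻¹' {y} := by
    rw [← Set.preimage_iUnion₂]
    simp
  rw [hrw]
  refine hS.biUnion fun y _ => ?_
  obtain ⟨g₀, rfl⟩ := QuotientGroup.mk_surjective y
  have : (QuotientGroup.mk : G → G ⧸ N) ⁻¹' {(g₀ : G ⧸ N)} = (fun n => g₀ * n) '' (N : Set G) := by
    ext x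
    simp only [Set.mem_preimage, Set.mem_singleton_iff, Set.mem_image]
    constructor
    · intro h
      have h2 := (QuotientGroup.eq (s := N) (a := x) (b := g₀)).1 h
      exact ⟨g₀⁻¹ * x, by simpa using inv_mem h2, by group⟩
    · rintro ⟨n, hn, rfl⟩
      refine (QuotientGroup.eq (s := N)).2 ?_
      simpa using inv_mem hn
  rw [this]
  haveI := hN
  exact ((N : Set G).toFinite).image _

lemma mem_zpowers_of_coprime_pow {v r : G} {j : ℤ} (hr : r = v ^ j)
    (hcop : IsCoprime j (orderOf v : ℤ)) : v ∈ zpowers r := by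
  obtain ⟨a, b, hab⟩ := hcop
  refine ⟨a, ?_⟩
  subst hr
  have hvu : v ^ (b * (orderOf v : ℤ)) = 1 := by
    rw [mul_comm, zpow_mul, zpow_natCast, pow_orderOf_eq_one, one_zpow]
  have h1 : v ^ (a * j + b * (orderOf v : ℤ)) = v := by rw [hab, zpow_one]
  rw [zpow_add, hvu, mul_one] at h1
  show (v ^ j) ^ a = v
  rw [← zpow_mul, mul_comm j a]
  exact h1

lemma odd_inverted_mem_sink {t v : G} {R : Set G} (ht : t * t = 1)
    (hinv : t * v * t = v⁻¹) (hodd : Odd (orderOf v))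
    (hR : IsRightEngelSink R t) : ∃ r ∈ R, v ∈ zpowers r := by
  have htinv : t⁻¹ = t := by
    rw [← mul_one t⁻¹, ← ht, ← mul_assoc, inv_mul_cancel, one_mul]
  obtain ⟨x, hx⟩ : ∃ x : G, x = t * v := ⟨_, rfl⟩
  have hx2 : x * x = 1 := by
    rw [hx, show t * v * (t * v) = (t * v * t) * v from by group, hinv, inv_mul_cancel]
  have hxinv : x⁻¹ = x := by
    rw [← mul_one x⁻¹, ← hx2, ← mul_assoc, inv_mul_cancel, one_mul]
  have tconj : ∀ j : ℤ, t * v ^ j * t⁻¹ = v ^ (-j) := by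
    intro j
    have h1 : (MulAut.conj t) (v ^ j) = ((MulAut.conj t) v) ^ j := map_zpow _ _ _
    simp only [MulAut.conj_apply] at h1
    rw [h1, htinv, hinv, ← zpow_neg_one, ← zpow_mul, neg_one_mul]
  have fconj : ∀ j : ℤ, x * v ^ j * x = v ^ (-j) := by
    intro j
    calc x * v ^ j * x = t * v ^ (j + 1) * t⁻¹ * v := by
          rw [hx, htinv, zpow_add, zpow_one]; group
    _ = v ^ (-(j + 1)) * v ^ (1:ℤ) := by rw [tconj, zpow_one]
    _ = v ^ (-j) := by rw [← zpow_add]; ring_nf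
  have key : ∀ n : ℕ, ∃ j : ℤ, rcomm t x (n + 1) = v ^ j ∧ j.natAbs = 2 ^ (n + 1) := by
    intro n
    induction n with
    | zero =>
      refine ⟨2, ?_, rfl⟩
      rw [rcomm_succ, rcomm_zero, htinv, hxinv]
      have htx : t * x = v := by rw [hx, ← mul_assoc, ht, one_mul]
      rw [show t * x * t * x = (t * x) * (t * x) from by group, htx]
      rw [show (2:ℤ) = 1 + 1 from rfl, zpow_add, zpow_one]
    | succ n ih =>
      obtain ⟨j, hj, habs⟩ := ih
      refine ⟨-2 * j, ?_, ?_⟩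
      · rw [rcomm_succ, hj, hxinv]
        calc (v ^ j)⁻¹ * x * v ^ j * x = (v ^ j)⁻¹ * (x * v ^ j * x) := by group
        _ = v ^ (-j) * v ^ (-j) := by rw [fconj, ← zpow_neg]
        _ = v ^ (-2 * j) := by rw [← zpow_add]; ring_nf
      · rw [Int.natAbs_mul, habs]
        simp [pow_succ]
        ring
  obtain ⟨N, hN⟩ := hR x
  obtain ⟨j, hj, habs⟩ := key N
  refine ⟨rcomm t x (N + 1), hN (N + 1) (by omega), ?_⟩
  refine mem_zpowers_of_coprime_pow hj ?_
  rw [Int.isCoprime_iff_gcd_eq_one, Int.gcd, Int.natAbs_natCast, habs]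
  exact Nat.Coprime.pow_left _ (Nat.coprime_two_left.2 hodd)

lemma isPGroup_two_of (K : Subgroup G) (h : ∀ x ∈ K, Is2Elt x) : IsPGroup 2 K := by
  intro x
  obtain ⟨k, hk⟩ := h x x.2
  exact ⟨k, by ext; simpa using hk⟩

lemma sylow_conj (hlf : LFHyp G) (hsyl : ∀ P : Sylow 2 G, Finite P) (P Q : Sylow 2 G) :
    ∃ y : G, ∀ x : G, x ∈ Q.toSubgroup ↔ y * x * y⁻¹ ∈ P.toSubgroup := by
  haveI := hsyl P
  haveI := hsyl Q
  have hs : ((P : Set G) ∪ (Q : Set G)).Finite := (Set.toFinite _).union (Set.toFinite _)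
  set K := Subgroup.closure ((P : Set G) ∪ (Q : Set G)) with hK
  haveI hKfin : Finite K := lf_set hlf hs
  have hPK : P.toSubgroup ≤ K := fun x hx => Subgroup.subset_closure (Or.inl hx)
  have hQK : Q.toSubgroup ≤ K := fun x hx => Subgroup.subset_closure (Or.inr hx)
  set P₁ := P.toSubgroup.subgroupOf K with hP₁def
  set Q₁ := Q.toSubgroup.subgroupOf K with hQ₁def
  obtain ⟨SP, hSP⟩ := (P.isPGroup'.comap_subtype (K := K)).exists_le_sylow
  obtain ⟨SQ, hSQ⟩ := (Q.isPGroup'.comap_subtype (K := K)).exists_le_sylow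
  have hmapP : SP.toSubgroup.map K.subtype = P.toSubgroup := by
    refine P.is_maximal' (SP.isPGroup'.map K.subtype) ?_
    have h1 : P₁.map K.subtype ≤ SP.toSubgroup.map K.subtype := Subgroup.map_mono hSP
    rwa [hP₁def, Subgroup.subgroupOf_map_subtype, inf_eq_left.2 hPK] at h1
  have hmapQ : SQ.toSubgroup.map K.subtype = Q.toSubgroup := by
    refine Q.is_maximal' (SQ.isPGroup'.map K.subtype) ?_
    have h1 : Q₁.map K.subtype ≤ SQ.toSubgroup.map K.subtype := Subgroup.map_mono hSQ
    rwa [hQ₁def, Subgroup.subgroupOf_map_subtype, inf_eq_left.2 hQK] at h1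
  have hSPeq : SP.toSubgroup = P₁ := by
    refine Subgroup.map_injective K.subtype_injective ?_
    rw [hmapP, hP₁def, Subgroup.subgroupOf_map_subtype, inf_eq_left.2 hPK]
  have hSQeq : SQ.toSubgroup = Q₁ := by
    refine Subgroup.map_injective K.subtype_injective ?_
    rw [hmapQ, hQ₁def, Subgroup.subgroupOf_map_subtype, inf_eq_left.2 hQK]
  obtain ⟨k, hk⟩ := MulAction.exists_smul_eq K SQ SP
  have hconj : MulAut.conj k • SQ.toSubgroup = SP.toSubgroup := by
    rw [← Sylow.coe_subgroup_smul, hk]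
  refine ⟨(k : G), fun x => ?_⟩
  constructor
  · intro hx
    have hxK : x ∈ K := hQK hx
    have hx1 : (⟨x, hxK⟩ : K) ∈ SQ.toSubgroup := by
      rw [hSQeq]; exact Subgroup.mem_subgroupOf.2 hx
    have hx2 : MulAut.conj k • (⟨x, hxK⟩ : K) ∈ MulAut.conj k • SQ.toSubgroup :=
      Subgroup.smul_mem_pointwise_smul _ _ _ hx1
    rw [hconj] at hx2
    have : (MulAut.conj k • (⟨x, hxK⟩ : K) : K) ∈ P₁ := by rw [← hSPeq]; exact hx2
    have h3 := Subgroup.mem_subgroupOf.1 this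
    simpa [MulAut.smul_def, MulAut.conj_apply] using h3
  · intro hx
    have hyK : (k : G) * x * (k : G)⁻¹ ∈ K := hPK hx
    have hxK : x ∈ K := by
      have := K.mul_mem (K.mul_mem (K.inv_mem k.2) hyK) k.2
      simpa [mul_assoc] using this
    have hx1 : (⟨x, hxK⟩ : K) ∈ SQ.toSubgroup := by
      have hmem : MulAut.conj k • (⟨x, hxK⟩ : K) ∈ SP.toSubgroup := by
        rw [hSPeq]
        refine Subgroup.mem_subgroupOf.2 ?_
        simpa [MulAut.smul_def, MulAut.conj_apply] using hx
      rw [← hconj] at hmem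
      exact (Subgroup.smul_mem_pointwise_smul_iff).1 hmem
    rw [hSQeq] at hx1
    exact Subgroup.mem_subgroupOf.1 hx1

-- conjugate subgroups have equal cardinality
lemma card_eq_of_conj {A B : Subgroup G} {y : G}
    (h : ∀ x : G, x ∈ B ↔ y * x * y⁻¹ ∈ A) : Nat.card B = Nat.card A := by
  refine Nat.card_congr ⟨fun x => ⟨y * x * y⁻¹, (h x).1 x.2⟩,
    fun a => ⟨y⁻¹ * a * y, (h _).2 (by simpa [mul_assoc] using a.2)⟩, ?_, ?_⟩
  · intro x; ext; simp [mul_assoc]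
  · intro a; ext; simp [mul_assoc]

lemma card_comap_mk' {Z : Subgroup G} [Z.Normal] (Qb : Subgroup (G ⧸ Z))
    [Finite (Qb.comap (QuotientGroup.mk' Z))] :
    Nat.card Qb * Nat.card Z = Nat.card (Qb.comap (QuotientGroup.mk' Z)) ∧ Finite Qb := by
  set Qt := Qb.comap (QuotientGroup.mk' Z) with hQt
  have hZle : Z ≤ Qt := by
    intro z hz
    show (QuotientGroup.mk' Z) z ∈ Qb
    have : (QuotientGroup.mk' Z) z = 1 := by
      rw [← MonoidHom.mem_ker, QuotientGroup.ker_mk' Z]; exact hz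
    rw [this]; exact Qb.one_mem
  set f : Qt →* (G ⧸ Z) := (QuotientGroup.mk' Z).comp Qt.subtype with hf
  have hrange : f.range = Qb := by
    rw [hf, MonoidHom.range_comp, Subgroup.range_subtype,
      Subgroup.map_comap_eq_self_of_surjective (QuotientGroup.mk'_surjective Z)]
  have hker : f.ker = Z.subgroupOf Qt := by
    rw [hf, ← MonoidHom.comap_ker, QuotientGroup.ker_mk' Z]; rfl
  have h1 : Nat.card Qt = Nat.card (Qt ⧸ f.ker) * Nat.card f.ker :=
    Subgroup.card_eq_card_quotient_mul_card_subgroup f.ker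
  have h2 : Nat.card (Qt ⧸ f.ker) = Nat.card Qb := by
    rw [Nat.card_congr (QuotientGroup.quotientKerEquivRange f).toEquiv, hrange]
  have h3 : Nat.card f.ker = Nat.card Z := by
    rw [hker, Nat.card_congr (Subgroup.subgroupOfEquivOfLe hZle).toEquiv]
  have hfinb : Finite Qb := by
    rw [← hrange]
    have : Function.Surjective f.rangeRestrict := f.rangeRestrict_surjective
    exact Finite.of_surjective _ this
  exact ⟨by rw [h1, h2, h3], hfinb⟩

end MoreAux

universe u

theorem MAIN : ∀ (e : ℕ) (G : Type u) [Group G], LFHyp G → SinkHyp G → BddHyp G e →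
    {g : G | Is2Elt g}.Finite := by
  intro e
  induction e with
  | zero =>
    intro G _ hlf hsink hbdd
    refine (Set.finite_singleton (1 : G)).subset ?_
    intro g hg
    have h2 : IsPGroup 2 (zpowers g) := by
      refine isPGroup_two_of _ ?_
      rintro x ⟨j, rfl⟩
      obtain ⟨k, hk⟩ := hg
      exact ⟨k, by rw [← zpow_natCast, ← zpow_mul, mul_comm, zpow_mul, zpow_natCast, hk,
        one_zpow]⟩
    have := (hbdd _ h2).2
    rw [pow_zero, Nat.dvd_one, Nat.card_zpowers] at this
    simpa using orderOf_eq_one_iff.1 this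
  | succ e ih =>
    intro G _ hlf hsink hbdd
    by_cases hT : ∀ g : G, Is2Elt g → g = 1
    · exact (Set.finite_singleton (1 : G)).subset (fun g hg => hT g hg)
    push_neg at hT
    obtain ⟨g₀, hg₀2, hg₀1⟩ := hT
    have h2elt_zpowers : ∀ g : G, Is2Elt g → IsPGroup 2 (zpowers g) := by
      intro g hg
      refine isPGroup_two_of _ ?_
      rintro x ⟨j, rfl⟩
      obtain ⟨k, hk⟩ := hg
      exact ⟨k, by rw [← zpow_natCast, ← zpow_mul, mul_comm, zpow_mul, zpow_natCast, hk,
        one_zpow]⟩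
    -- Step SC1
    have SC1 : ∀ t : G, t * t = 1 → t ≠ 1 →
        {g : G | g ∈ Subgroup.centralizer {t} ∧ Is2Elt g}.Finite := by
      intro t ht ht1
      set C := Subgroup.centralizer ({t} : Set G) with hC
      have htC : t ∈ C := Subgroup.mem_centralizer_iff.2 (by
        rintro h hh
        rw [Set.mem_singleton_iff] at hh
        subst hh; rfl)
      set t' : C := ⟨t, htC⟩ with ht'
      have ht'comm : ∀ c : C, c * t' = t' * c := by
        intro c
        have := Subgroup.mem_centralizer_iff.1 c.2 t (Set.mem_singleton t)
        exact Subtype.ext (by simpa using this.symm)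
      have ht'2 : t' * t' = 1 := Subtype.ext (by simpa using ht)
      have ht'1 : t' ≠ 1 := fun h => ht1 (congrArg Subtype.val h)
      have hordt' : orderOf t' = 2 := orderOf_eq_prime (by rw [pow_two]; exact ht'2) ht'1
      set Z := zpowers t' with hZ
      have hZ2 : ∀ z ∈ Z, z * z = 1 := by
        rintro z ⟨j, rfl⟩
        rw [← zpow_add, ← two_mul, zpow_mul]
        have h22 : t' ^ (2 : ℤ) = 1 := by
          rw [show (2:ℤ) = ((2:ℕ):ℤ) from rfl, zpow_natCast, pow_two]; exact ht'2
        rw [h22, one_zpow]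
      haveI hZn : Z.Normal := by
        constructor
        rintro z ⟨j, rfl⟩ c
        refine ⟨j, ?_⟩
        have hcz : Commute c (t' ^ j) := (Commute.zpow_right (ht'comm c) j)
        show t' ^ j = c * t' ^ j * c⁻¹
        exact (mul_inv_eq_iff_eq_mul.2 hcz.eq).symm
      haveI hZfin : Finite Z := lf_zpowers (lfhyp_subgroup hlf C) t'
      have hlfC : LFHyp C := lfhyp_subgroup hlf C
      have hsinkC : SinkHyp C := by
        intro g hg
        obtain ⟨R, hRf, hR⟩ := hsink (g : G) ((is2Elt_coe_iff g).2 hg)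
        exact ⟨_, hRf.preimage (Subtype.val_injective.injOn), sink_subgroup hR⟩
      have hπ : Function.Surjective (QuotientGroup.mk' Z) := QuotientGroup.mk'_surjective Z
      have hlfQ : LFHyp (C ⧸ Z) := lfhyp_surjective hlfC (QuotientGroup.mk' Z) hπ
      have hlift2 : ∀ g : C, Is2Elt ((QuotientGroup.mk' Z) g) → Is2Elt g := by
        intro g hg
        obtain ⟨k, hk⟩ := hg
        have hmem : g ^ 2 ^ k ∈ Z := by
          rw [← QuotientGroup.ker_mk' Z, MonoidHom.mem_ker, map_pow, hk]
        exact ⟨k + 1, by rw [pow_succ, pow_mul, pow_two]; exact hZ2 _ hmem⟩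
      have hsinkQ : SinkHyp (C ⧸ Z) := by
        intro gb hgb
        obtain ⟨g, rfl⟩ := hπ gb
        obtain ⟨R, hRf, hR⟩ := hsinkC g (hlift2 g hgb)
        exact ⟨_, hRf.image _, sink_map _ hπ hR⟩
      have hbddQ : BddHyp (C ⧸ Z) e := by
        intro Qb hQb
        set Qt := Qb.comap (QuotientGroup.mk' Z) with hQt
        have hQt2 : IsPGroup 2 Qt := by
          intro q
          obtain ⟨k, hk⟩ := hQb ⟨(QuotientGroup.mk' Z) q, q.2⟩
          have hk' : ((QuotientGroup.mk' Z) (q : C)) ^ 2 ^ k = 1 := by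
            simpa using congrArg Subtype.val hk
          have hmem : (q : C) ^ 2 ^ k ∈ Z := by
            rw [← QuotientGroup.ker_mk' Z, MonoidHom.mem_ker, map_pow, hk']
          refine ⟨k + 1, ?_⟩
          have hq1 : ((q : C)) ^ 2 ^ (k + 1) = 1 := by
            rw [pow_succ, pow_mul, pow_two]; exact hZ2 _ hmem
          exact Subtype.ext (by simpa using hq1)
        have h1 := hbdd (Qt.map C.subtype) (hQt2.map _)
        have hcards : Nat.card (Qt.map C.subtype) = Nat.card Qt :=
          card_subgroup_map_of_injective _ C.subtype_injective _
        haveI hQtfin : Finite Qt := by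
          haveI := h1.1
          exact Finite.of_equiv _ (Subgroup.equivMapOfInjective Qt C.subtype
            C.subtype_injective).toEquiv.symm
        obtain ⟨hcard2, hfinb⟩ := card_comap_mk' Qb
        refine ⟨hfinb, ?_⟩
        have hdvd : Nat.card Qt ∣ 2 ^ (e + 1) := by rw [← hcards]; exact h1.2
        rw [← hcard2, Nat.card_zpowers, hordt'] at hdvd
        rw [pow_succ] at hdvd
        exact (Nat.mul_dvd_mul_iff_right (by norm_num : 0 < 2)).1 hdvd
      have hTQ := ih (C ⧸ Z) hlfQ hsinkQ hbddQ
      have hTC : {g : C | Is2Elt g}.Finite := by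
        have hsub : {g : C | Is2Elt g} ⊆
            (QuotientGroup.mk : C → C ⧸ Z) ⁻¹' {x : C ⧸ Z | Is2Elt x} := by
          intro g hg
          exact Is2Elt.map (QuotientGroup.mk' Z) hg
        exact (preimage_mk_finite hZfin hTQ).subset hsub
      have himg : {g : G | g ∈ C ∧ Is2Elt g} = Subtype.val '' {g : C | Is2Elt g} := by
        ext g
        constructor
        · rintro ⟨hgC, hg2⟩
          exact ⟨⟨g, hgC⟩, (is2Elt_coe_iff ⟨g, hgC⟩).1 hg2, rfl⟩
        · rintro ⟨g', hg', rfl⟩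
          exact ⟨g'.2, (is2Elt_coe_iff g').2 hg'⟩
      rw [himg]
      exact hTC.image _
    -- Step SC2 : conjugacy classes of involutions are finite
    have SC2 : ∀ t : G, t * t = 1 → t ≠ 1 →
        {s : G | ∃ y : G, y⁻¹ * t * y = s}.Finite := by
      intro t ht ht1
      have htinv : t⁻¹ = t := by
        rw [← mul_one t⁻¹, ← ht, ← mul_assoc, inv_mul_cancel, one_mul]
      obtain ⟨R, hRfin, hR⟩ := hsink t ⟨1, by
        rw [show (2:ℕ) ^ 1 = 2 from rfl, pow_two]; exact ht⟩
      set F : Set G := ⋃ r ∈ R, ((zpowers r : Subgroup G) : Set G) with hF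
      have hFfin : F.Finite := hRfin.biUnion (fun r _ => by
        haveI := lf_zpowers hlf r
        exact Set.toFinite _)
      set J := {c : G | c ∈ Subgroup.centralizer ({t} : Set G) ∧ c * c = 1 ∧ c ≠ 1} with hJ
      have hJfin : J.Finite := (SC1 t ht ht1).subset (fun c hc =>
        ⟨hc.1, ⟨1, by rw [show (2:ℕ) ^ 1 = 2 from rfl, pow_two]; exact hc.2.1⟩⟩)
      have hBfin : (⋃ c ∈ J, {s : G | s ∈ Subgroup.centralizer ({c} : Set G) ∧ Is2Elt s}).Finite :=
        hJfin.biUnion (fun c hc => SC1 c hc.2.1 hc.2.2)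
      refine ((hFfin.image (fun w => t * w)).union hBfin).subset ?_
      rintro s0 ⟨y, hy⟩
      obtain ⟨s, hs⟩ : ∃ s : G, s = y⁻¹ * t * y := ⟨_, rfl⟩
      rw [← hs] at hy
      subst hy
      have hs2 : s * s = 1 := by
        rw [hs, show y⁻¹ * t * y * (y⁻¹ * t * y) = y⁻¹ * (t * t) * y from by group, ht]
        group
      have hsinv : s⁻¹ = s := by
        rw [← mul_one s⁻¹, ← hs2, ← mul_assoc, inv_mul_cancel, one_mul]
      obtain ⟨w, hw⟩ : ∃ w : G, w = t * s := ⟨_, rfl⟩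
      have hw_t : t * w * t = w⁻¹ := by
        rw [hw, mul_inv_rev, hsinv, htinv,
          show t * (t * s) * t = (t * t) * (s * t) from by group, ht, one_mul]
      have hw_s : s * w * s = w⁻¹ := by
        rw [hw, mul_inv_rev, hsinv, htinv,
          show s * (t * s) * s = (s * t) * (s * s) from by group, hs2, mul_one]
      by_cases hodd : Odd (orderOf w)
      · obtain ⟨r, hrR, hvr⟩ := odd_inverted_mem_sink ht hw_t hodd hR
        left
        refine ⟨w, Set.mem_biUnion hrR hvr, ?_⟩
        show t * w = s
        rw [hw, ← mul_assoc, ht, one_mul]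
      · right
        have hwo : orderOf w ≠ 0 := lf_orderOf hlf w
        have heven : 2 ∣ orderOf w := by
          rcases Nat.even_or_odd (orderOf w) with he | ho
          · exact he.two_dvd
          · exact absurd ho hodd
        obtain ⟨m', hm'⟩ := heven
        have hm'0 : m' ≠ 0 := by rintro rfl; simp at hm'; exact hwo (orderOf_eq_zero_iff.2 hm')
        obtain ⟨c, hc⟩ : ∃ c : G, c = w ^ m' := ⟨_, rfl⟩
        have hc2 : c * c = 1 := by
          rw [hc, ← pow_add, ← two_mul, ← hm', pow_orderOf_eq_one]
        have hcinv : c⁻¹ = c := by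
          rw [← mul_one c⁻¹, ← hc2, ← mul_assoc, inv_mul_cancel, one_mul]
        have hc1 : c ≠ 1 := by
          intro h
          rw [hc] at h
          have hdvd := orderOf_dvd_of_pow_eq_one h
          rw [hm'] at hdvd
          have h1 := Nat.le_of_dvd (Nat.pos_of_ne_zero hm'0) hdvd
          omega
        have hconjpow : ∀ u : G, u * u = 1 → u * w * u = w⁻¹ → u * c * u = c := by
          intro u hu huw
          have huinv : u⁻¹ = u := by
            rw [← mul_one u⁻¹, ← hu, ← mul_assoc, inv_mul_cancel, one_mul]
          have h1 : u * w ^ m' * u⁻¹ = (u * w * u⁻¹) ^ m' := by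
            simpa [MulAut.conj_apply] using (map_pow (MulAut.conj u) w m')
          rw [huinv] at h1
          rw [hc, h1, huw, inv_pow, ← hc, hcinv]
        have hct : c ∈ Subgroup.centralizer ({t} : Set G) := by
          refine Subgroup.mem_centralizer_iff.2 ?_
          rintro h hh
          rw [Set.mem_singleton_iff] at hh
          rw [hh]
          have h1 := hconjpow t ht hw_t
          calc t * c = t * c * (t * t) := by rw [ht]; group
          _ = (t * c * t) * t := by group
          _ = c * t := by rw [h1]
        have hsc : s ∈ Subgroup.centralizer ({c} : Set G) := by
          refine Subgroup.mem_centralizer_iff.2 ?_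
          rintro h hh
          rw [Set.mem_singleton_iff] at hh
          rw [hh]
          have h1 := hconjpow s hs2 hw_s
          calc c * s = (s * s) * (c * s) := by rw [hs2]; group
          _ = s * (s * c * s) := by group
          _ = s * c := by rw [h1]
        exact Set.mem_biUnion (⟨hct, hc2, hc1⟩ : _ ∈ J)
          ⟨hsc, ⟨1, by rw [show (2:ℕ) ^ 1 = 2 from rfl, pow_two]; exact hs2⟩⟩
    -- Step: finitely many involutions
    have hsyl : ∀ P : Sylow 2 G, Finite P := fun P => (hbdd _ P.isPGroup').1
    obtain ⟨P⟩ : Nonempty (Sylow 2 G) := inferInstance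
    have hIfin : {s : G | s * s = 1 ∧ s ≠ 1}.Finite := by
      have hIPfin : {p : G | p ∈ P.toSubgroup ∧ p * p = 1 ∧ p ≠ 1}.Finite := by
        haveI := hsyl P
        exact (Set.toFinite ((P : Subgroup G) : Set G)).subset (fun p hp => hp.1)
      refine (hIPfin.biUnion (fun p hp => SC2 p hp.2.1 hp.2.2)).subset ?_
      rintro s ⟨hs2, hs1⟩
      have hzp : IsPGroup 2 (zpowers s) := h2elt_zpowers s
        ⟨1, by rw [show (2:ℕ) ^ 1 = 2 from rfl, pow_two]; exact hs2⟩
      obtain ⟨Q, hQ⟩ := hzp.exists_le_sylow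
      obtain ⟨y, hy⟩ := sylow_conj hlf hsyl P Q
      have hsQ : s ∈ Q.toSubgroup := hQ (Subgroup.mem_zpowers s)
      have hpP : y * s * y⁻¹ ∈ P.toSubgroup := (hy s).1 hsQ
      refine Set.mem_biUnion (show y * s * y⁻¹ ∈ _ from ⟨hpP, ?_, ?_⟩) ⟨y, ?_⟩
      · rw [show y * s * y⁻¹ * (y * s * y⁻¹) = y * (s * s) * y⁻¹ from by group, hs2]
        group
      · intro h
        have : s = 1 := by
          have := congrArg (fun z => y⁻¹ * z * y) h
          simpa [mul_assoc] using this
        exact hs1 this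
      · group
    -- Step: all 2-elements
    refine ((Set.finite_singleton (1 : G)).union
      (hIfin.biUnion (fun τ hτ => SC1 τ hτ.1 hτ.2))).subset ?_
    intro g hg
    by_cases hg1 : g = 1
    · exact Or.inl (by simp [hg1])
    right
    obtain ⟨Q, hQ⟩ := (h2elt_zpowers g hg).exists_le_sylow
    haveI := hsyl Q
    have hgQ : g ∈ Q.toSubgroup := hQ (Subgroup.mem_zpowers g)
    haveI : Nontrivial Q.toSubgroup :=
      ⟨⟨⟨g, hgQ⟩, 1, fun h => hg1 (by simpa using congrArg Subtype.val h)⟩⟩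
    haveI : Nontrivial (Subgroup.center Q.toSubgroup) := Q.isPGroup'.center_nontrivial
    obtain ⟨z', hz'⟩ := exists_ne (1 : Subgroup.center Q.toSubgroup)
    have hz2 : Is2Elt ((z' : Q.toSubgroup) : G) := by
      obtain ⟨k, hk⟩ := Q.isPGroup' (z' : Q.toSubgroup)
      exact ⟨k, by simpa using congrArg (Subtype.val) hk⟩
    have hzne : ((z' : Q.toSubgroup) : G) ≠ 1 := by
      intro h
      apply hz'
      ext
      simpa using h
    obtain ⟨τ, hτzp, hτ2, hτ1⟩ := exists_involution hz2 hzne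
    have hcommzg : ((z' : Q.toSubgroup) : G) * g = g * ((z' : Q.toSubgroup) : G) := by
      have := (Subgroup.mem_center_iff.1 z'.2) ⟨g, hgQ⟩
      simpa using (congrArg Subtype.val this).symm
    have hcommτg : Commute g τ := by
      obtain ⟨j, rfl⟩ := hτzp
      exact Commute.zpow_right (hcommzg.symm) j
    refine Set.mem_biUnion (show τ ∈ _ from ⟨hτ2, hτ1⟩) ?_
    refine ⟨Subgroup.mem_centralizer_iff.2 ?_, hg⟩
    rintro h hh
    rw [Set.mem_singleton_iff] at hh
    rw [hh]
    exact hcommτg.symm.eq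

lemma bdd_of_hsyl {G : Type*} [Group G] (hlf : LFHyp G)
    (hsyl : ∀ P : Sylow 2 G, Finite P) : ∃ e : ℕ, BddHyp G e := by
  obtain ⟨P₀⟩ : Nonempty (Sylow 2 G) := inferInstance
  haveI := hsyl P₀
  obtain ⟨e, he⟩ := IsPGroup.iff_card.1 P₀.isPGroup'
  refine ⟨e, fun K hK => ?_⟩
  obtain ⟨Q, hQ⟩ := hK.exists_le_sylow
  haveI := hsyl Q
  have hfin : Finite K := Finite.of_injective _ (Subgroup.inclusion_injective hQ)
  refine ⟨hfin, ?_⟩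
  have h1 : Nat.card K ∣ Nat.card Q.toSubgroup := Subgroup.card_dvd_of_le hQ
  obtain ⟨y, hy⟩ := sylow_conj hlf hsyl P₀ Q
  have h2 : Nat.card Q.toSubgroup = Nat.card P₀.toSubgroup := card_eq_of_conj hy
  rw [h2, he] at h1
  exact h1

end EngelAux

theorem stmt10 {G : Type*} [Group G]
    (hlf : ∀ S : Finset G, Finite (Subgroup.closure (S : Set G)))
    (hsyl : ∀ P : Sylow 2 G, Finite P)
    (hsink : ∀ g : G, (∃ k : ℕ, g ^ (2 ^ k) = 1) →
      ∃ R : Set G, R.Finite ∧ IsRightEngelSink R g) :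
    ∃ N : Subgroup G, ∃ _ : N.Normal, Finite ↥N ∧ ∀ x : G ⧸ N, Odd (orderOf x) := by
  have hlf' : LFHyp G := hlf
  have hsink' : SinkHyp G := hsink
  obtain ⟨e, hbdd⟩ := bdd_of_hsyl hlf' hsyl
  have hT : {g : G | Is2Elt g}.Finite := MAIN e G hlf' hsink' hbdd
  set N := Subgroup.closure {g : G | Is2Elt g} with hN
  have hNfin : Finite N := lf_set hlf' hT
  have hconjset : ∀ y : G, (fun x => y * x * y⁻¹) '' {g : G | Is2Elt g} = {g : G | Is2Elt g} := by
    intro y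
    ext g
    constructor
    · rintro ⟨x, ⟨k, hk⟩, rfl⟩
      refine ⟨k, ?_⟩
      have h1 : (MulAut.conj y) (x ^ 2 ^ k) = ((MulAut.conj y) x) ^ 2 ^ k := map_pow _ _ _
      simp only [MulAut.conj_apply] at h1
      show (y * x * y⁻¹) ^ 2 ^ k = 1
      rw [← h1, hk, mul_one, mul_inv_cancel]
    · rintro ⟨k, hk⟩
      refine ⟨y⁻¹ * g * y, ⟨k, ?_⟩, by group⟩
      have h1 : (MulAut.conj y⁻¹) (g ^ 2 ^ k) = ((MulAut.conj y⁻¹) g) ^ 2 ^ k := map_pow _ _ _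
      simp only [MulAut.conj_apply, inv_inv] at h1
      show (y⁻¹ * g * y) ^ 2 ^ k = 1
      rw [← h1, hk, mul_one, inv_mul_cancel]
  haveI hNn : N.Normal := by
    constructor
    intro n hn y
    have hmap : N.map (MulAut.conj y).toMonoidHom = N := by
      rw [hN, MonoidHom.map_closure]
      congr 1
      exact hconjset y
    rw [← hmap]
    exact Subgroup.mem_map.2 ⟨n, hn, rfl⟩
  refine ⟨N, hNn, hNfin, ?_⟩
  intro x
  obtain ⟨g, rfl⟩ := QuotientGroup.mk_surjective x
  have hn0 : orderOf g ≠ 0 := lf_orderOf hlf' g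
  set n := orderOf g with hor
  set u := n / 2 ^ n.factorization 2 with hu
  have hmulsplit : 2 ^ n.factorization 2 * u = n := Nat.ordProj_mul_ordCompl_eq_self n 2
  have huodd : Odd u := by
    rcases Nat.even_or_odd u with he | ho
    · exact absurd he.two_dvd (Nat.not_dvd_ordCompl Nat.prime_two hn0)
    · exact ho
  have h2elt : Is2Elt (g ^ u) := by
    refine ⟨n.factorization 2, ?_⟩
    rw [← pow_mul, mul_comm, hmulsplit, hor, pow_orderOf_eq_one]
  have hgu : g ^ u ∈ N := Subgroup.subset_closure h2elt
  have hxu : (QuotientGroup.mk g : G ⧸ N) ^ u = 1 := by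
    have h1 : ((g ^ u : G) : G ⧸ N) = 1 := (QuotientGroup.eq_one_iff _).2 hgu
    simpa using h1
  have hdvd : orderOf (QuotientGroup.mk g : G ⧸ N) ∣ u := orderOf_dvd_of_pow_eq_one hxu
  rcases Nat.even_or_odd (orderOf (QuotientGroup.mk g : G ⧸ N)) with he | ho
  · exact absurd (he.two_dvd.trans hdvd) (by
      intro h
      exact (Nat.not_odd_iff_even.2 (even_iff_two_dvd.2 h)) huodd)
  · exact ho
end

section
/- Let G = H⟨a⟩ be a finite group where H is a normal nilpotent subgroup with gcd(|a|,|H|) = 1 and H = [H, a]. If N is a normal a-invariant subgroup of H with R(a) ∩ N = {1}, then N ≤ Z(H). -/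
section AuxLemmas

variable {G : Type*} [Group G]

private lemma conj_pow_fix (a c : G) (h2 : a⁻¹ * c * a = c) :
    ∀ j : ℕ, a⁻¹ * c ^ j * a = c ^ j := by
  intro j
  induction j with
  | zero => simp
  | succ j ih =>
      have e : a⁻¹ * c ^ (j + 1) * a = (a⁻¹ * c ^ j * a) * (a⁻¹ * c * a) := by
        rw [pow_succ]; group
      rw [e, ih, h2, ← pow_succ]

private lemma keyG (a x : G) (m : ℕ) (ham : a ^ m = 1)
    (hfix : a⁻¹ * (x⁻¹ * (a⁻¹ * x * a)) * a = x⁻¹ * (a⁻¹ * x * a))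
    (hpow1 : (x⁻¹ * (a⁻¹ * x * a)) ^ m = 1 → x⁻¹ * (a⁻¹ * x * a) = 1) :
    a⁻¹ * x * a = x := by
  set c := x⁻¹ * (a⁻¹ * x * a) with hc
  have h1 : a⁻¹ * x * a = x * c := by rw [hc]; group
  have hpow : ∀ k : ℕ, (a ^ k)⁻¹ * x * (a ^ k) = x * c ^ k := by
    intro k
    induction k with
    | zero => simp
    | succ k ih =>
        have e : (a ^ (k + 1))⁻¹ * x * a ^ (k + 1) = a⁻¹ * ((a ^ k)⁻¹ * x * a ^ k) * a := by
          rw [pow_succ]; group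
        have e2 : a⁻¹ * (x * c ^ k) * a = (a⁻¹ * x * a) * (a⁻¹ * c ^ k * a) := by group
        rw [e, ih, e2, h1, conj_pow_fix a c hfix k, mul_assoc, ← pow_succ']
  have hm := hpow m
  rw [ham] at hm
  simp only [inv_one, one_mul, mul_one] at hm
  have hcm : c ^ m = 1 := by
    have := hm.symm
    rwa [mul_eq_left] at this
  rw [h1, hpow1 hcm, mul_one]

private lemma abelianKey {Q : Type*} [CommGroup Q] (β : Q →* Q) (m : ℕ)
    (hβm : ∀ q, β^[m] q = q)
    (hcop : ∀ q : Q, q ^ m = 1 → q = 1)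
    (q : Q) (hq : ∃ n, (fun r => r⁻¹ * β r)^[n] q = 1) : β q = q := by
  set f : Q → Q := fun r => r⁻¹ * β r with hf
  have step2 : ∀ r : Q, f (f r) = 1 → f r = 1 := by
    intro r h
    have hfix : β (f r) = f r := by
      have h' : (f r)⁻¹ * β (f r) = 1 := h
      exact (inv_mul_eq_one.mp h').symm
    have hβr : β r = r * f r := by rw [hf]; simp
    have hpow : ∀ k : ℕ, β^[k] r = r * (f r) ^ k := by
      intro k
      induction k with
      | zero => simp
      | succ k ih =>
          rw [Function.iterate_succ_apply', ih, map_mul, map_pow, hfix, hβr,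
            mul_assoc, ← pow_succ']
    have h2 : r * (f r) ^ m = r := by rw [← hpow m, hβm r]
    exact hcop _ (mul_eq_left.mp h2)
  have hf1 : ∀ (n : ℕ) (r : Q), f^[n] r = 1 → f r = 1 := by
    intro n
    induction n with
    | zero =>
        intro r h
        simp only [Function.iterate_zero_apply] at h
        rw [h, hf]; simp
    | succ n ih =>
        intro r h
        rw [Function.iterate_succ_apply] at h
        exact step2 r (ih (f r) h)
  obtain ⟨n, hn⟩ := hq
  have := hf1 n q hn
  rw [hf] at this
  exact (inv_mul_eq_one.mp this).symm

private lemma subgroup_eq_of_le_of_card_le [Finite G]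
    {A B : Subgroup G} (h : A ≤ B) (hc : Nat.card ↥B ≤ Nat.card ↥A) : A = B := by
  have hinj := Subgroup.inclusion_injective h
  have hcard : Nat.card ↥A = Nat.card ↥B :=
    le_antisymm (Nat.card_le_card_of_injective _ hinj) hc
  have hbij : Function.Bijective (Subgroup.inclusion h) :=
    (Nat.bijective_iff_injective_and_card _).mpr ⟨hinj, hcard⟩
  ext g
  refine ⟨fun hg => h hg, fun hg => ?_⟩
  obtain ⟨⟨y, hy⟩, hxy⟩ := hbij.2 ⟨g, hg⟩
  have hcoe : y = g := congrArg Subtype.val hxy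
  exact hcoe ▸ hy

private lemma conj_map_eq [Finite G] (N : Subgroup G) (g : G)
    (hle : ∀ n ∈ N, g * n * g⁻¹ ∈ N) :
    Subgroup.map (MulAut.conj g).toMonoidHom N = N := by
  apply subgroup_eq_of_le_of_card_le
  · rintro _ ⟨n, hn, rfl⟩
    simpa using hle n hn
  · have := Nat.card_congr (Subgroup.equivMapOfInjective N (MulAut.conj g).toMonoidHom
      (MulAut.conj g).injective).toEquiv
    omega

private lemma auxEngel [Finite G] (H : Subgroup G)
    (hnil : Group.IsNilpotent ↥H) (a : G)
    (hcop : Nat.Coprime (orderOf a) (Nat.card H))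
    (R : Set G) (hRsink : IsRightEngelSink R a) :
    ∀ (k : ℕ) (N : Subgroup G), Nat.card ↥N ≤ k → N ≤ H →
      (∀ h ∈ H, ∀ n ∈ N, h * n * h⁻¹ ∈ N) →
      (∀ n ∈ N, a⁻¹ * n * a ∈ N) →
      (R ∩ (N : Set G) ⊆ {1}) →
      ∀ x ∈ N, a⁻¹ * x * a = x := by
  intro k
  induction k with
  | zero =>
      intro N hcard
      have h0 := Nat.card_pos (α := ↥N)
      omega
  | succ k ih =>
      intro N hcard hNH hNnorm hNa hint x hx
      set m := orderOf a with hmdef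
      have ham : a ^ m = 1 := pow_orderOf_eq_one a
      have hm0 : 0 < m := orderOf_pos a
      have hordN : ∀ z ∈ N, z ^ m = 1 → z = 1 := by
        intro z hz hzm
        have h1 : orderOf z ∣ m := orderOf_dvd_of_pow_eq_one hzm
        have h2 : orderOf z ∣ Nat.card ↥H := Subgroup.orderOf_dvd_natCard H (hNH hz)
        have h3 : orderOf z ∣ 1 := (Nat.dvd_gcd h1 h2).trans (dvd_of_eq hcop)
        exact orderOf_eq_one_iff.mp (Nat.dvd_one.mp h3)
      have hMN : ⁅N, N⁆ ≤ N := by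
        rw [Subgroup.commutator_le]
        intro g1 h1 g2 h2
        rw [commutatorElement_def]
        exact mul_mem (mul_mem (mul_mem h1 h2) (inv_mem h1)) (inv_mem h2)
      by_cases hc2 : Nat.card ↥N ≤ Nat.card ↥(⁅N, N⁆ : Subgroup G)
      · -- perfect case: N is trivial
        have hMeqN : ⁅N, N⁆ = N := subgroup_eq_of_le_of_card_le hMN hc2
        haveI := hnil
        haveI : Group.IsNilpotent ↥N :=
          nilpotent_of_mulEquiv (Subgroup.subgroupOfEquivOfLe hNH)
        have htop : ⁅(⊤ : Subgroup ↥N), (⊤ : Subgroup ↥N)⁆ = ⊤ := by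
          apply Subgroup.map_injective N.subtype_injective
          rw [Subgroup.map_commutator, ← MonoidHom.range_eq_map, Subgroup.range_subtype, hMeqN]
        obtain ⟨n0, hn0⟩ := Subgroup.nilpotent_iff_lowerCentralSeries.mp ‹Group.IsNilpotent ↥N›
        have hall : ∀ j : ℕ, Subgroup.lowerCentralSeries (⊤ : Subgroup ↥N) j = ⊤ := by
          intro j
          induction j with
          | zero => exact Subgroup.lowerCentralSeries_zero (S := (⊤ : Subgroup ↥N))
          | succ j ihj => rw [Subgroup.lowerCentralSeries_succ, ihj]; exact htop
        have hbot : (⊤ : Subgroup ↥N) = ⊥ := by rw [← hall n0, hn0]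
        have hx1 : (⟨x, hx⟩ : ↥N) ∈ (⊥ : Subgroup ↥N) := hbot ▸ Subgroup.mem_top _
        have hx2 : x = 1 := congrArg Subtype.val (Subgroup.mem_bot.mp hx1)
        rw [hx2]; group
      · -- main case
        push_neg at hc2
        -- stability of M under conjugation
        have hmapNa : Subgroup.map (MulAut.conj a⁻¹).toMonoidHom N = N :=
          conj_map_eq N a⁻¹ (by intro n hn; simpa using hNa n hn)
        have hMmap : ∀ g : G, Subgroup.map (MulAut.conj g).toMonoidHom N = N →
            Subgroup.map (MulAut.conj g).toMonoidHom ⁅N, N⁆ = ⁅N, N⁆ := by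
          intro g hg
          rw [Subgroup.map_commutator, hg]
        have hMnorm : ∀ h ∈ H, ∀ z ∈ ⁅N, N⁆, h * z * h⁻¹ ∈ ⁅N, N⁆ := by
          intro h hh z hz
          have h4 := Subgroup.mem_map_of_mem (MulAut.conj h).toMonoidHom hz
          rw [hMmap h (conj_map_eq N h (hNnorm h hh))] at h4
          simpa using h4
        have hMa_inv : ∀ z ∈ ⁅N, N⁆, a⁻¹ * z * a ∈ ⁅N, N⁆ := by
          intro z hz
          have h4 := Subgroup.mem_map_of_mem (MulAut.conj a⁻¹).toMonoidHom hz
          rw [hMmap a⁻¹ hmapNa] at h4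
          simpa using h4
        have hcardM : Nat.card ↥(⁅N, N⁆ : Subgroup G) ≤ k := by
          have hle := Subgroup.card_le_of_le hMN
          omega
        have hMa : ∀ z ∈ ⁅N, N⁆, a⁻¹ * z * a = z :=
          ih ⁅N, N⁆ hcardM (hMN.trans hNH) hMnorm hMa_inv
            (fun y hy => hint ⟨hy.1, hMN hy.2⟩)
        -- abelianization machinery
        set βN : ↥N →* ↥N :=
          { toFun := fun y => ⟨a⁻¹ * ↑y * a, hNa ↑y y.2⟩,
            map_one' := by ext; simp,
            map_mul' := by
              intro y z
              ext
              show a⁻¹ * (↑y * ↑z) * a = (a⁻¹ * ↑y * a) * (a⁻¹ * ↑z * a)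
              group } with hβN
        have hβNval : ∀ z : ↥N, ((βN z : ↥N) : G) = a⁻¹ * ↑z * a := fun z => rfl
        set βQ : Abelianization ↥N →* Abelianization ↥N :=
          Abelianization.lift ((Abelianization.of).comp βN) with hβQ
        have hβQof : ∀ y : ↥N, βQ (Abelianization.of y) = Abelianization.of (βN y) :=
          fun y => Abelianization.lift_apply_of _ _
        have hofsurj : Function.Surjective
            (Abelianization.of : ↥N → Abelianization ↥N) := by
          intro q
          exact QuotientGroup.induction_on q fun y => ⟨y, rfl⟩
        have hker : ∀ y : ↥N, Abelianization.of y = 1 →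
            y ∈ ⁅(⊤ : Subgroup ↥N), (⊤ : Subgroup ↥N)⁆ := by
          intro y hy
          exact (QuotientGroup.eq_one_iff y).mp hy
        have hβNcoe : ∀ (j : ℕ) (y : ↥N), ((βN^[j] y : ↥N) : G) = (a ^ j)⁻¹ * ↑y * a ^ j := by
          intro j
          induction j with
          | zero => intro y; simp
          | succ j ihj =>
              intro y
              rw [Function.iterate_succ_apply']
              show a⁻¹ * ↑(βN^[j] y) * a = _
              rw [ihj y, pow_succ]
              group
        have hβQm : ∀ q, βQ^[m] q = q := by
          intro q
          obtain ⟨y, rfl⟩ := hofsurj q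
          have hiter : ∀ j : ℕ, βQ^[j] (Abelianization.of y)
              = Abelianization.of (βN^[j] y) := by
            intro j
            induction j with
            | zero => rfl
            | succ j ihj =>
                rw [Function.iterate_succ_apply', ihj, hβQof,
                  Function.iterate_succ_apply' (⇑βN) j y]
          rw [hiter m]
          congr 1
          ext
          rw [hβNcoe m y, ham]
          simp
        have hβQ1 : ∀ j : ℕ, βQ^[j] (1 : Abelianization ↥N) = 1 := by
          intro j
          induction j with
          | zero => rfl
          | succ j ihj => rw [Function.iterate_succ_apply, map_one, ihj]
        have hβinj : ∀ r : Abelianization ↥N, βQ r = 1 → r = 1 := by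
          intro r hr
          obtain ⟨m', hm'⟩ := Nat.exists_eq_succ_of_ne_zero hm0.ne'
          have : βQ^[m] r = r := hβQm r
          rw [hm', Function.iterate_succ_apply, hr, hβQ1] at this
          exact this.symm
        have hcopQ : ∀ q : Abelianization ↥N, q ^ m = 1 → q = 1 := by
          intro q hqm
          have h1 : orderOf q ∣ m := orderOf_dvd_of_pow_eq_one hqm
          have h2 : orderOf q ∣ Nat.card (Abelianization ↥N) := orderOf_dvd_natCard q
          have h3 : Nat.card (Abelianization ↥N) ∣ Nat.card ↥N :=
            Subgroup.card_dvd_of_surjective Abelianization.of hofsurj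
          have h4 : Nat.card ↥N ∣ Nat.card ↥H := Subgroup.card_dvd_of_le hNH
          have h5 : orderOf q ∣ 1 :=
            (Nat.dvd_gcd h1 ((h2.trans h3).trans h4)).trans (dvd_of_eq hcop)
          exact orderOf_eq_one_iff.mp (Nat.dvd_one.mp h5)
        set ψ : Abelianization ↥N → Abelianization ↥N := fun r => r⁻¹ * βQ r with hψ
        have hψinv : ∀ r, ψ r⁻¹ = (ψ r)⁻¹ := by
          intro r; simp [hψ, mul_comm]
        have hψiterinv : ∀ (n : ℕ) (r), ψ^[n] r⁻¹ = (ψ^[n] r)⁻¹ := by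
          intro n
          induction n with
          | zero => intro r; rfl
          | succ n ihn =>
              intro r
              rw [Function.iterate_succ_apply, Function.iterate_succ_apply, hψinv, ihn]
        have hψβ : ∀ r, ψ (βQ r) = βQ (ψ r) := by
          intro r; simp [hψ]
        have hψiterβ : ∀ (n : ℕ) (r), ψ^[n] (βQ r) = βQ (ψ^[n] r) := by
          intro n
          induction n with
          | zero => intro r; rfl
          | succ n ihn =>
              intro r
              rw [Function.iterate_succ_apply, Function.iterate_succ_apply, hψβ, ihn]
        -- the Engel condition in the abelianization
        have hEngel : ∀ q : Abelianization ↥N, ∃ nn : ℕ, ψ^[nn] q = 1 := by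
          intro q
          obtain ⟨w, rfl⟩ := hofsurj q
          set x' : G := ↑w * a with hx'
          have Cmem : ∀ j : ℕ, rcomm a x' (j + 1) ∈ N := by
            intro j
            induction j with
            | zero =>
                have e : rcomm a x' 1 = a⁻¹ * ((a⁻¹ * (↑w)⁻¹ * a) * ↑w) * a := by
                  show a⁻¹ * x'⁻¹ * a * x' = _
                  rw [hx']; group
                rw [e]
                exact hNa _ (mul_mem (hNa _ (inv_mem w.2)) w.2)
            | succ j ihj =>
                have e : rcomm a x' (j + 2) = (rcomm a x' (j + 1))⁻¹ *
                    (a⁻¹ * ((↑w)⁻¹ * rcomm a x' (j + 1) * ↑w) * a) := by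
                  show (rcomm a x' (j + 1))⁻¹ * x'⁻¹ * rcomm a x' (j + 1) * x' = _
                  rw [hx']; group
                rw [e]
                refine mul_mem (inv_mem ihj) (hNa _ ?_)
                have h6 := hNnorm _ (inv_mem (hNH w.2)) _ ihj
                simpa using h6
          set d : ℕ → ↥N := fun j => (⟨rcomm a x' (j + 1), Cmem j⟩ : ↥N) with hd
          have hofconj : ∀ z : ↥N, Abelianization.of (w⁻¹ * z * w) = Abelianization.of z := by
            intro z
            rw [map_mul, map_mul, map_inv,
              mul_comm ((Abelianization.of w)⁻¹) (Abelianization.of z),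
              mul_assoc, inv_mul_cancel, mul_one]
          have hrec : ∀ j : ℕ, Abelianization.of (d (j + 1)) = ψ (Abelianization.of (d j)) := by
            intro j
            have hdval : d (j + 1) = (d j)⁻¹ * βN (w⁻¹ * d j * w) := by
              ext
              show rcomm a x' (j + 2) = _
              simp only [Subgroup.coe_mul, InvMemClass.coe_inv, hβNval]
              show (rcomm a x' (j + 1))⁻¹ * x'⁻¹ * rcomm a x' (j + 1) * x' = _
              simp only [hd]; rw [hx']; group
            rw [hdval, map_mul, map_inv, ← hβQof, hofconj]
          have hiter : ∀ j : ℕ,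
              Abelianization.of (d j) = ψ^[j] (Abelianization.of (d 0)) := by
            intro j
            induction j with
            | zero => rfl
            | succ j ihj =>
                rw [hrec j, ihj, Function.iterate_succ_apply']
          have hd0 : Abelianization.of (d 0) = (βQ (ψ (Abelianization.of w)))⁻¹ := by
            have hval : d 0 = βN (βN w⁻¹ * w) := by
              ext
              show rcomm a x' 1 = _
              simp only [Subgroup.coe_mul, InvMemClass.coe_inv, hβNval]
              show a⁻¹ * x'⁻¹ * a * x' = _
              rw [hx']; group
            rw [hval, ← hβQof, map_mul, map_inv, map_inv, ← hβQof]
            have e : (βQ (Abelianization.of w))⁻¹ * Abelianization.of w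
                = (ψ (Abelianization.of w))⁻¹ := by
              rw [hψ]; group
            rw [e, map_inv]
          obtain ⟨n₀, hn₀⟩ := hRsink x'
          have h1 : rcomm a x' (n₀ + 1) = 1 :=
            hint ⟨hn₀ (n₀ + 1) (Nat.le_succ n₀), Cmem n₀⟩
          have hdn : d n₀ = 1 := Subtype.ext h1
          have h2 : ψ^[n₀] (Abelianization.of (d 0)) = 1 := by
            rw [← hiter n₀, hdn, map_one]
          rw [hd0, hψiterinv, inv_eq_one, hψiterβ] at h2
          have h3 := hβinj _ h2
          exact ⟨n₀ + 1, by rw [Function.iterate_succ_apply]; exact h3⟩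
        -- conclude the quotient action is trivial
        have hβid : ∀ q, βQ q = q := fun q => abelianKey βQ m hβQm hcopQ q (hEngel q)
        -- hence [x, a] lies in the derived subgroup
        have h1 : Abelianization.of ((⟨x, hx⟩ : ↥N)⁻¹ * βN ⟨x, hx⟩) = 1 := by
          rw [map_mul, map_inv, ← hβQof, hβid, inv_mul_cancel]
        have h2 := hker _ h1
        have h3 : x⁻¹ * (a⁻¹ * x * a) ∈ ⁅N, N⁆ := by
          have h4 := Subgroup.mem_map_of_mem N.subtype h2
          rw [Subgroup.map_commutator, ← MonoidHom.range_eq_map, Subgroup.range_subtype] at h4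
          simpa [hβNval] using h4
        exact keyG a x m ham (hMa _ h3)
          (hordN _ (mul_mem (inv_mem hx) (hNa x hx)))

end AuxLemmas

theorem stmt13 {G : Type*} [Group G] [Finite G] (H : Subgroup G) (hN : H.Normal)
    (hnil : Group.IsNilpotent ↥H)
    (a : G) (hgen : H ⊔ Subgroup.zpowers a = ⊤)
    (hcop : Nat.Coprime (orderOf a) (Nat.card H))
    (hHa : commSub H a = H)
    (R : Set G) (hR : IsMinRightEngelSink R a)
    (N : Subgroup G) (hNH : N ≤ H)
    (hNnorm : ∀ h ∈ H, ∀ n ∈ N, h * n * h⁻¹ ∈ N)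
    (hNa : ∀ n ∈ N, a⁻¹ * n * a ∈ N)
    (hint : R ∩ (N : Set G) ⊆ {1}) :
    ∀ n ∈ N, ∀ h ∈ H, n * h = h * n := by
  have hNa1 : ∀ x ∈ N, a⁻¹ * x * a = x :=
    auxEngel H hnil a hcop R hR.1 (Nat.card ↥N) N le_rfl hNH hNnorm hNa hint
  have hHC : H ≤ Subgroup.centralizer (N : Set G) := by
    rw [← hHa]
    rw [commSub, Subgroup.closure_le]
    rintro z ⟨h, hh, rfl⟩
    rw [SetLike.mem_coe, Subgroup.mem_centralizer_iff]
    intro n hn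
    -- show n * (h⁻¹ * (a⁻¹ * h * a)) = (h⁻¹ * (a⁻¹ * h * a)) * n
    have e1 : a * n * a⁻¹ = n := by
      conv_lhs => rw [← hNa1 n hn]
      group
    have hw : h * n * h⁻¹ ∈ N := hNnorm h hh n hn
    have e2 : a⁻¹ * (h * n * h⁻¹) * a = h * n * h⁻¹ := hNa1 _ hw
    have key : (h⁻¹ * (a⁻¹ * h * a)) * n * (h⁻¹ * (a⁻¹ * h * a))⁻¹ = n := by
      calc (h⁻¹ * (a⁻¹ * h * a)) * n * (h⁻¹ * (a⁻¹ * h * a))⁻¹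
          = h⁻¹ * (a⁻¹ * (h * (a * n * a⁻¹) * h⁻¹) * a) * h := by group
        _ = h⁻¹ * (a⁻¹ * (h * n * h⁻¹) * a) * h := by rw [e1]
        _ = h⁻¹ * (h * n * h⁻¹) * h := by rw [e2]
        _ = n := by group
    calc n * (h⁻¹ * (a⁻¹ * h * a))
        = ((h⁻¹ * (a⁻¹ * h * a)) * n * (h⁻¹ * (a⁻¹ * h * a))⁻¹) * (h⁻¹ * (a⁻¹ * h * a)) := by
          rw [key]
      _ = (h⁻¹ * (a⁻¹ * h * a)) * n := by group
  intro n hn h hh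
  exact Subgroup.mem_centralizer_iff.mp (hHC hh) n hn
end

section
/- Let G = H⟨a⟩ be a finite group where H is a normal abelian subgroup and gcd(|a|, |H|) = 1. Then H decomposes as the direct product H = [H, a] × C_H(a), and every element of [H, a] lies in the minimal right Engel sink of a. -/
namespace St17
variable {G : Type*} [Group G]

def ps (a h : G) : G := a⁻¹ * h * a
def ph (a h : G) : G := h⁻¹ * (a⁻¹ * h * a)
def nu (a h : G) : ℕ → G
  | 0 => 1
  | k+1 => h * ps a (nu a h k)
def wseq (a h : G) : ℕ → G
  | 0 => 1
  | k+1 => wseq a h k * nu a h k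
def psk (a : G) (k : ℕ) (h : G) : G := (a ^ k)⁻¹ * h * a ^ k

section
variable {H : Subgroup G} (a : G)

lemma nu_succ (h : G) (k : ℕ) : nu a h (k+1) = h * ps a (nu a h k) := rfl

lemma ps_mem (hN : H.Normal) {h : G} (hh : h ∈ H) : ps a h ∈ H := by
  simpa [ps] using hN.conj_mem h hh a⁻¹

lemma ph_mem (hN : H.Normal) {h : G} (hh : h ∈ H) : ph a h ∈ H :=
  mul_mem (inv_mem hh) (ps_mem a hN hh)

lemma ps_mul (x y : G) : ps a (x * y) = ps a x * ps a y := by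
  simp only [ps]; group

lemma ps_one : ps a 1 = 1 := by simp [ps]

lemma ps_inv (x : G) : ps a x⁻¹ = (ps a x)⁻¹ := by
  simp only [ps]; group

lemma ps_pow (x : G) (k : ℕ) : ps a (x ^ k) = (ps a x) ^ k := by
  induction k with
  | zero => simp [ps_one]
  | succ k ih => rw [pow_succ, ps_mul, ih, pow_succ]

lemma ph_ps_comm (x : G) : ph a (ps a x) = ps a (ph a x) := by
  simp only [ps, ph]; group

lemma ph_one : ph a 1 = 1 := by simp [ph]

lemma ph_inv (hN : H.Normal) (hab : ∀ h₁ ∈ H, ∀ h₂ ∈ H, h₁ * h₂ = h₂ * h₁)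
    {x : G} (hx : x ∈ H) : ph a x⁻¹ = (ph a x)⁻¹ := by
  have h1 : x * (ps a x)⁻¹ = (ps a x)⁻¹ * x :=
    hab x hx _ (inv_mem (ps_mem a hN hx))
  simp only [ph, ps] at *
  rw [show x⁻¹⁻¹ * (a⁻¹ * x⁻¹ * a) = x * (a⁻¹ * x * a)⁻¹ by group,
    show (x⁻¹ * (a⁻¹ * x * a))⁻¹ = (a⁻¹ * x * a)⁻¹ * x by group, h1]

lemma ph_mul (hN : H.Normal) (hab : ∀ h₁ ∈ H, ∀ h₂ ∈ H, h₁ * h₂ = h₂ * h₁)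
    {x y : G} (hx : x ∈ H) (hy : y ∈ H) :
    ph a (x * y) = ph a x * ph a y := by
  have h1 : (x⁻¹ * ps a x) * y⁻¹ = y⁻¹ * (x⁻¹ * ps a x) :=
    hab _ (mul_mem (inv_mem hx) (ps_mem a hN hx)) _ (inv_mem hy)
  simp only [ph, ps] at *
  calc (x * y)⁻¹ * (a⁻¹ * (x * y) * a)
      = y⁻¹ * (x⁻¹ * (a⁻¹ * x * a)) * (a⁻¹ * y * a) := by group
    _ = (x⁻¹ * (a⁻¹ * x * a)) * y⁻¹ * (a⁻¹ * y * a) := by rw [← h1]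
    _ = x⁻¹ * (a⁻¹ * x * a) * (y⁻¹ * (a⁻¹ * y * a)) := by group

lemma psk_succ (k : ℕ) (h : G) : psk a (k+1) h = ps a (psk a k h) := by
  simp only [psk, ps, pow_succ]; group

lemma nu_mem (hN : H.Normal) {h : G} (hh : h ∈ H) (k : ℕ) : nu a h k ∈ H := by
  induction k with
  | zero => simpa [nu] using one_mem H
  | succ k ih => exact mul_mem hh (ps_mem a hN ih)

lemma nu_ph (h : G) (k : ℕ) : nu a (ph a h) k = h⁻¹ * psk a k h := by
  induction k with
  | zero => simp [nu, psk]
  | succ k ih =>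
      rw [nu_succ, ih, psk_succ, ps_mul, ps_inv]
      simp only [ph, ps]; group

lemma nu_succ' (h : G) (k : ℕ) : nu a h (k+1) = nu a h k * psk a k h := by
  induction k with
  | zero => simp [nu, psk, ps_one]
  | succ k ih =>
      rw [nu_succ, ih, ps_mul, psk_succ, ← mul_assoc, ← nu_succ, ih]

lemma ps_nu (h : G) (k : ℕ) : ps a (nu a h k) = h⁻¹ * nu a h k * psk a k h := by
  induction k with
  | zero => simp [nu, psk, ps_one]
  | succ k ih =>
      rw [nu_succ' a h k, ps_mul, ih, psk_succ]
      group

lemma nu_mul (hN : H.Normal) (hab : ∀ h₁ ∈ H, ∀ h₂ ∈ H, h₁ * h₂ = h₂ * h₁)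
    {x y : G} (hx : x ∈ H) (hy : y ∈ H) (k : ℕ) :
    nu a (x * y) k = nu a x k * nu a y k := by
  induction k with
  | zero => simp [nu]
  | succ k ih =>
      rw [nu_succ, ih, ps_mul, nu_succ, nu_succ]
      have h1 : y * ps a (nu a x k) = ps a (nu a x k) * y :=
        hab y hy _ (ps_mem a hN (nu_mem a hN hx k))
      calc x * y * (ps a (nu a x k) * ps a (nu a y k))
          = x * (y * ps a (nu a x k)) * ps a (nu a y k) := by group
        _ = x * (ps a (nu a x k) * y) * ps a (nu a y k) := by rw [h1]
        _ = x * ps a (nu a x k) * (y * ps a (nu a y k)) := by group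

lemma nu_fix {x : G} (hx : ps a x = x) (k : ℕ) : nu a x k = x ^ k := by
  induction k with
  | zero => simp [nu]
  | succ k ih => rw [nu_succ, ih, ps_pow, hx, pow_succ]; group

end
end St17

namespace St17
variable {G : Type*} [Group G] {H : Subgroup G} (a : G)

lemma ph_conj (x : G) : a * ph a x * a⁻¹ = ph a (a * x * a⁻¹) := by
  simp only [ph]; group

lemma ps_eq_iff {x : G} : ps a x = x ↔ a * x = x * a := by
  simp only [ps]
  constructor
  · intro h
    conv_lhs => rw [← h]
    group
  · intro h
    calc a⁻¹ * x * a = a⁻¹ * (x * a) := by group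
      _ = a⁻¹ * (a * x) := by rw [← h]
      _ = x := by group

lemma ph_pow (hN : H.Normal) (hab : ∀ h₁ ∈ H, ∀ h₂ ∈ H, h₁ * h₂ = h₂ * h₁)
    {x : G} (hx : x ∈ H) (k : ℕ) : ph a (x ^ k) = ph a x ^ k := by
  induction k with
  | zero => simp [ph_one]
  | succ k ih => rw [pow_succ, ph_mul a hN hab (pow_mem hx k) hx, ih, pow_succ]

lemma ph_nu (hN : H.Normal) (hab : ∀ h₁ ∈ H, ∀ h₂ ∈ H, h₁ * h₂ = h₂ * h₁)
    {h : G} (hh : h ∈ H) (k : ℕ) : ph a (nu a h k) = nu a (ph a h) k := by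
  induction k with
  | zero => simp [nu, ph_one]
  | succ k ih =>
      rw [nu_succ, ph_mul a hN hab hh (ps_mem a hN (nu_mem a hN hh k)),
        ph_ps_comm, ih, nu_succ]

lemma wseq_mem (hN : H.Normal) {h : G} (hh : h ∈ H) (k : ℕ) :
    wseq a h k ∈ H := by
  induction k with
  | zero => simpa [wseq] using one_mem H
  | succ k ih => exact mul_mem ih (nu_mem a hN hh k)

lemma nu_w (hN : H.Normal) (hab : ∀ h₁ ∈ H, ∀ h₂ ∈ H, h₁ * h₂ = h₂ * h₁)
    {h : G} (hh : h ∈ H) (k : ℕ) :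
    nu a h k = h ^ k * ph a (wseq a h k) := by
  induction k with
  | zero => simp [nu, wseq, ph_one]
  | succ k ih =>
      have hpsk : psk a k h = h * ph a (nu a h k) := by
        rw [ph_nu a hN hab hh, nu_ph]; group
      have hc : ph a (wseq a h k) * h = h * ph a (wseq a h k) :=
        hab _ (ph_mem a hN (wseq_mem a hN hh k)) _ hh
      rw [nu_succ', ih, hpsk, wseq,
        ph_mul a hN hab (wseq_mem a hN hh k) (nu_mem a hN hh k)]
      calc h ^ k * ph a (wseq a h k) * (h * ph a (nu a h k))
          = h ^ k * (ph a (wseq a h k) * h) * ph a (nu a h k) := by group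
        _ = h ^ k * (h * ph a (wseq a h k)) * ph a (nu a h k) := by rw [hc]
        _ = h ^ (k+1) * (ph a (wseq a h k) * ph a (nu a h k)) := by
            rw [pow_succ]; group

lemma mem_commSub_iff (hN : H.Normal) (hab : ∀ h₁ ∈ H, ∀ h₂ ∈ H, h₁ * h₂ = h₂ * h₁)
    {z : G} : z ∈ commSub H a ↔ ∃ h ∈ H, z = ph a h := by
  constructor
  · intro hz
    refine Subgroup.closure_induction (p := fun g _ => ∃ h ∈ H, g = ph a h)
      ?_ ?_ ?_ ?_ hz
    · rintro x ⟨h, hh, rfl⟩; exact ⟨h, hh, rfl⟩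
    · exact ⟨1, one_mem H, (ph_one a).symm⟩
    · rintro x y _ _ ⟨h₁, hh₁, rfl⟩ ⟨h₂, hh₂, rfl⟩
      exact ⟨h₁ * h₂, mul_mem hh₁ hh₂, (ph_mul a hN hab hh₁ hh₂).symm⟩
    · rintro x _ ⟨h, hh, rfl⟩
      exact ⟨h⁻¹, inv_mem hh, by rw [ph_inv a hN hab hh]⟩
  · rintro ⟨h, hh, rfl⟩
    exact Subgroup.subset_closure ⟨h, hh, rfl⟩

lemma exists_u {m n : ℕ} (hm : 0 < m) (hc : n.Coprime m) :
    ∃ u : ℕ, ∀ y : G, y ^ m = 1 → y ^ (n * u) = y := by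
  rcases eq_or_lt_of_le (show 1 ≤ m from hm) with h1 | h1
  · exact ⟨1, fun y hy => by
      have : y = 1 := by simpa [← h1] using hy
      simp [this]⟩
  · obtain ⟨u, -, hu⟩ := Nat.exists_mul_mod_eq_one_of_coprime hc h1
    refine ⟨u, fun y hy => ?_⟩
    have hdm := Nat.div_add_mod (n * u) m
    rw [← hdm, hu, pow_add, pow_mul, hy, one_pow, pow_one, one_mul]

lemma pow_card_of_mem {h : G} (hh : h ∈ H) : h ^ Nat.card H = 1 := by
  have h2 : ((⟨h, hh⟩ : H) ^ Nat.card H : H) = 1 := pow_card_eq_one'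
  have h3 := congrArg (fun x : H => (x : G)) h2
  simp only [SubmonoidClass.coe_pow, OneMemClass.coe_one] at h3
  exact h3

lemma ph_iter_mem (hN : H.Normal) {h : G} (hh : h ∈ H) (k : ℕ) :
    (ph a)^[k] h ∈ H := by
  induction k with
  | zero => simpa using hh
  | succ k ih => rw [Function.iterate_succ_apply']; exact ph_mem a hN ih

lemma comm_step (hab : ∀ h₁ ∈ H, ∀ h₂ ∈ H, h₁ * h₂ = h₂ * h₁)
    {b c : G} (hb : b ∈ H) (hc : c ∈ H) :
    c⁻¹ * (b * a)⁻¹ * c * (b * a) = ph a c := by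
  have h1 : b⁻¹ * c * b = c := by
    calc b⁻¹ * c * b = b⁻¹ * (c * b) := by group
      _ = b⁻¹ * (b * c) := by rw [← hab b hb c hc]
      _ = c := by group
  calc c⁻¹ * (b * a)⁻¹ * c * (b * a)
      = c⁻¹ * a⁻¹ * (b⁻¹ * c * b) * a := by group
    _ = c⁻¹ * a⁻¹ * c * a := by rw [h1]
    _ = ph a c := by simp only [ph]; group

lemma rcomm_succ (g x : G) (n : ℕ) :
    rcomm g x (n + 1) = (rcomm g x n)⁻¹ * x⁻¹ * (rcomm g x n) * x := rfl

lemma rcomm_ba (hN : H.Normal) (hab : ∀ h₁ ∈ H, ∀ h₂ ∈ H, h₁ * h₂ = h₂ * h₁)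
    {b : G} (hb : b ∈ H) (k : ℕ) :
    rcomm a (b * a) (k + 1) = (ps a ((ph a)^[k + 1] b))⁻¹ := by
  induction k with
  | zero =>
      rw [rcomm_succ]
      show a⁻¹ * (b * a)⁻¹ * a * (b * a) = _
      rw [Function.iterate_one]
      simp only [ps, ph]; group
  | succ k ih =>
      have hPmem : (ph a)^[k + 1] b ∈ H := ph_iter_mem a hN hb (k + 1)
      have hcmem : (ps a ((ph a)^[k + 1] b))⁻¹ ∈ H :=
        inv_mem (ps_mem a hN hPmem)
      rw [rcomm_succ, ih, comm_step a hab hb hcmem,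
        ph_inv a hN hab (ps_mem a hN hPmem), ph_ps_comm,
        Function.iterate_succ_apply' (ph a) (k+1) b]

end St17

open St17 in
theorem stmt17 {G : Type*} [Group G] [Finite G] (H : Subgroup G) (hN : H.Normal)
    (hab : ∀ h₁ ∈ H, ∀ h₂ ∈ H, h₁ * h₂ = h₂ * h₁)
    (a : G) (hgen : H ⊔ Subgroup.zpowers a = ⊤)
    (hcop : Nat.Coprime (orderOf a) (Nat.card H)) :
    (commSub H a ⊓ (H ⊓ Subgroup.centralizer {a}) = ⊥ ∧
        commSub H a ⊔ (H ⊓ Subgroup.centralizer {a}) = H) ∧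
      ∀ R : Set G, IsMinRightEngelSink R a → (commSub H a : Set G) ⊆ R := by
  classical
  set n := orderOf a with hn
  set m := Nat.card H with hm
  have hpsk_n : ∀ h : G, psk a n h = h := fun h => by
    simp [psk, hn, pow_orderOf_eq_one]
  -- inf = ⊥
  have hinf : commSub H a ⊓ (H ⊓ Subgroup.centralizer {a}) = ⊥ := by
    rw [eq_bot_iff]
    intro x hx
    have hxK : x ∈ commSub H a := hx.1
    have hxH : x ∈ H := hx.2.1
    have hxC : x ∈ Subgroup.centralizer {a} := hx.2.2
    obtain ⟨h, hh, rfl⟩ := (mem_commSub_iff a hN hab).mp hxK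
    have hax : a * ph a h = ph a h * a :=
      Subgroup.mem_centralizer_iff.mp hxC a rfl
    have hps : ps a (ph a h) = ph a h := (ps_eq_iff a).mpr hax
    have e1 : nu a (ph a h) n = (ph a h) ^ n := nu_fix a hps n
    have e2 : nu a (ph a h) n = h⁻¹ * psk a n h := nu_ph a h n
    have hxn : (ph a h) ^ n = 1 := by
      rw [← e1, e2, hpsk_n, inv_mul_cancel]
    have hord1 : orderOf (ph a h) ∣ n := orderOf_dvd_of_pow_eq_one hxn
    have hord2 : orderOf (ph a h) ∣ m :=
      orderOf_dvd_of_pow_eq_one (pow_card_of_mem hxH)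
    have h1 : orderOf (ph a h) = 1 :=
      Nat.dvd_one.mp (hcop ▸ Nat.dvd_gcd hord1 hord2)
    exact Subgroup.mem_bot.mpr (orderOf_eq_one_iff.mp h1)
  have hKH : commSub H a ≤ H := by
    rw [commSub]
    refine (Subgroup.closure_le H).mpr ?_
    rintro z ⟨h, hh, rfl⟩
    exact ph_mem a hN hh
  -- sup = H
  have hsup : commSub H a ⊔ (H ⊓ Subgroup.centralizer {a}) = H := by
    refine le_antisymm (sup_le hKH inf_le_left) ?_
    intro h hh
    obtain ⟨u, hu⟩ := exists_u (G := G) (m := m) (n := n) Nat.card_pos hcop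
    set y := nu a h n with hy
    have hyH : y ∈ H := nu_mem a hN hh n
    have hyfix : ps a y = y := by
      rw [hy, ps_nu, hpsk_n]
      calc h⁻¹ * nu a h n * h = h⁻¹ * (nu a h n * h) := by group
        _ = h⁻¹ * (h * nu a h n) := by rw [← hab h hh _ hyH]
        _ = nu a h n := by group
    set c := y ^ u with hc
    have hcH : c ∈ H := pow_mem hyH u
    have hcfix : ps a c = c := by rw [hc, ps_pow, hyfix]
    have hcC : c ∈ Subgroup.centralizer {a} := by
      refine Subgroup.mem_centralizer_iff.mpr ?_
      intro g hg
      rw [Set.mem_singleton_iff] at hg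
      rw [hg]
      exact (ps_eq_iff a).mp hcfix
    have hcinv_fix : ps a c⁻¹ = c⁻¹ := by rw [ps_inv, hcfix]
    have hcn : c ^ n = y := by
      rw [hc, ← pow_mul, mul_comm u n]
      exact hu y (pow_card_of_mem hyH)
    have hh'H : h * c⁻¹ ∈ H := mul_mem hh (inv_mem hcH)
    have hnuh' : nu a (h * c⁻¹) n = 1 := by
      rw [nu_mul a hN hab hh (inv_mem hcH), nu_fix a hcinv_fix, inv_pow, hcn,
        ← hy, mul_inv_cancel]
    have hW : nu a (h * c⁻¹) n = (h * c⁻¹) ^ n * ph a (wseq a (h * c⁻¹) n) :=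
      nu_w a hN hab hh'H n
    set W := wseq a (h * c⁻¹) n with hWdef
    have hWH : W ∈ H := wseq_mem a hN hh'H n
    have hpow : (h * c⁻¹) ^ n = ph a W⁻¹ := by
      rw [ph_inv a hN hab hWH]
      rw [hnuh'] at hW
      exact eq_inv_of_mul_eq_one_left hW.symm
    have hdecomp : h * c⁻¹ = ph a (W⁻¹ ^ u) := by
      rw [ph_pow a hN hab (inv_mem hWH), ← hpow, ← pow_mul]
      exact (hu _ (pow_card_of_mem hh'H)).symm
    have hmemK : h * c⁻¹ ∈ commSub H a :=
      (mem_commSub_iff a hN hab).mpr ⟨W⁻¹ ^ u, pow_mem (inv_mem hWH) u, hdecomp⟩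
    have hhe : h = (h * c⁻¹) * c := by group
    rw [hhe]
    exact mul_mem (Subgroup.mem_sup_left hmemK)
      (Subgroup.mem_sup_right ⟨hcH, hcC⟩)
  refine ⟨⟨hinf, hsup⟩, ?_⟩
  -- Engel part
  have hKmap : ∀ z ∈ commSub H a, ph a z ∈ commSub H a := by
    intro z hz
    obtain ⟨h, hh, rfl⟩ := (mem_commSub_iff a hN hab).mp hz
    exact (mem_commSub_iff a hN hab).mpr ⟨ph a h, ph_mem a hN hh, rfl⟩
  have hKinj : ∀ z₁ ∈ commSub H a, ∀ z₂ ∈ commSub H a,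
      ph a z₁ = ph a z₂ → z₁ = z₂ := by
    intro z₁ h₁ z₂ h₂ he
    have hz₁H : z₁ ∈ H := hKH h₁
    have hz₂H : z₂ ∈ H := hKH h₂
    have hw : ph a (z₁⁻¹ * z₂) = 1 := by
      rw [ph_mul a hN hab (inv_mem hz₁H) hz₂H, ph_inv a hN hab hz₁H, he,
        inv_mul_cancel]
    have hwfix : ps a (z₁⁻¹ * z₂) = z₁⁻¹ * z₂ := by
      have : (z₁⁻¹ * z₂)⁻¹ * ps a (z₁⁻¹ * z₂) = 1 := hw
      exact (inv_mul_eq_one.mp this).symm ▸ (inv_mul_eq_one.mp this).symm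
    have hwC : z₁⁻¹ * z₂ ∈ Subgroup.centralizer {a} := by
      refine Subgroup.mem_centralizer_iff.mpr ?_
      intro g hg
      rw [Set.mem_singleton_iff] at hg
      rw [hg]
      exact (ps_eq_iff a).mp hwfix
    have hwbot : z₁⁻¹ * z₂ ∈ (⊥ : Subgroup G) := by
      rw [← hinf]
      exact Subgroup.mem_inf.mpr ⟨mul_mem (inv_mem h₁) h₂,
        Subgroup.mem_inf.mpr ⟨mul_mem (inv_mem hz₁H) hz₂H, hwC⟩⟩
    exact inv_mul_eq_one.mp (Subgroup.mem_bot.mp hwbot)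
  let f : commSub H a → commSub H a := fun z => ⟨ph a z, hKmap z z.2⟩
  have hfinj : Function.Injective f := fun z₁ z₂ he =>
    Subtype.ext (hKinj _ z₁.2 _ z₂.2 (congrArg Subtype.val he))
  have hfbij : Function.Bijective f := Finite.injective_iff_bijective.mp hfinj
  let e : Equiv.Perm (commSub H a) := Equiv.ofBijective f hfbij
  have hiter : ∀ (k : ℕ) (z : commSub H a),
      ((e ^ k) z : G) = (ph a)^[k] (z : G) := by
    intro k
    induction k with
    | zero => intro z; simp
    | succ k ih =>
        intro z
        rw [pow_succ', Equiv.Perm.mul_apply, Function.iterate_succ_apply',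
          ← ih z]
        rfl
  set d := orderOf e with hd
  have hdpos : 0 < d := orderOf_pos e
  intro R hR z hzK
  have hzK' : z ∈ commSub H a := hzK
  have hzH : z ∈ H := hKH hzK'
  obtain ⟨h1, hh1, hz1⟩ := (mem_commSub_iff a hN hab).mp (inv_mem hzK')
  set b := a * z⁻¹ * a⁻¹ with hb
  have hbK : b ∈ commSub H a := by
    refine (mem_commSub_iff a hN hab).mpr ⟨a * h1 * a⁻¹, hN.conj_mem h1 hh1 a, ?_⟩
    rw [hb, hz1, ph_conj]
  have hbH : b ∈ H := hKH hbK
  have hpsb : ps a b = z⁻¹ := by rw [hb]; simp only [ps]; group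
  obtain ⟨N, hNs⟩ := hR.1 (b * a)
  set nn := d * (N + 1) with hnn
  have hnge : nn ≥ N := by
    calc N ≤ N + 1 := Nat.le_succ N
      _ ≤ d * (N + 1) := Nat.le_mul_of_pos_left (N + 1) hdpos
  have hnne : nn ≠ 0 := Nat.mul_ne_zero hdpos.ne' (Nat.succ_ne_zero N)
  obtain ⟨k, hk⟩ := Nat.exists_eq_succ_of_ne_zero hnne
  have hen : e ^ nn = 1 := by
    rw [hnn, pow_mul, hd, pow_orderOf_eq_one, one_pow]
  have hfix : (ph a)^[nn] b = b := by
    have h2 := hiter nn ⟨b, hbK⟩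
    rw [hen] at h2
    simpa using h2.symm
  have hfix' : (ph a)^[k + 1] b = b := by rw [← Nat.succ_eq_add_one, ← hk]; exact hfix
  have hrc : rcomm a (b * a) nn = z := by
    rw [hk, Nat.succ_eq_add_one, rcomm_ba a hN hab hbH k, hfix', hpsb, inv_inv]
  rw [← hrc]
  exact hNs nn hnge
end

section
/- Let G be a finite group, H a normal subgroup, a ∈ G with G = H⟨a⟩ and gcd(|a|,|H|) = 1, and suppose y ∈ H has odd order with y^a = y⁻¹ and a² = 1. Then y belongs to the minimal right Engel sink R(a); in particular if a centralizes R(a), then y = 1. -/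
theorem stmt18 {G : Type*} [Group G] [Finite G] (H : Subgroup G) (hN : H.Normal)
    (a : G) (hgen : H ⊔ Subgroup.zpowers a = ⊤)
    (hcop : Nat.Coprime (orderOf a) (Nat.card H))
    (ha2 : a * a = 1)
    (y : G) (hy : y ∈ H) (hodd : Odd (orderOf y)) (hinv : a⁻¹ * y * a = y⁻¹)
    (R : Set G) (hR : IsMinRightEngelSink R a) :
    y ∈ R ∧ ((∀ r ∈ R, a * r = r * a) → y = 1) := by
  have ha : a⁻¹ = a := by rw [inv_eq_iff_mul_eq_one]; exact ha2
  have hay : a * y * a = y⁻¹ := by nth_rewrite 1 [← ha]; exact hinv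
  have hconj : ∀ k : ℤ, a⁻¹ * y ^ k * a = y ^ (-k) := by
    intro k
    have h1 : a⁻¹ * y ^ k * a = (a⁻¹ * y * a) ^ k := by
      induction k using Int.induction_on with
      | zero => simp [ha, ha2]
      | succ n ih => rw [zpow_add_one, zpow_add_one, ← ih]; group
      | pred n ih => rw [zpow_sub_one, zpow_sub_one, ← ih]; group
    rw [h1, hinv, inv_zpow, zpow_neg]
  have key : ∀ n : ℕ, rcomm a (y * a) (n + 1) = y ^ ((-2 : ℤ) ^ (n + 1)) := by
    intro n
    induction n with
    | zero =>
      show a⁻¹ * (y*a)⁻¹ * a * (y*a) = y ^ ((-2:ℤ)^1)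
      have step0 : a⁻¹ * (y*a)⁻¹ * a * (y*a) = (a⁻¹ * a⁻¹) * y⁻¹ * (a * y * a) := by
        group
      rw [step0, ha, ha2, hay, pow_one]
      group
    | succ n ih =>
      show (rcomm a (y*a) (n+1))⁻¹ * (y*a)⁻¹ * (rcomm a (y*a) (n+1)) * (y*a) = _
      rw [ih]
      set e : ℤ := (-2:ℤ) ^ (n+1) with he
      have h1 : a⁻¹ * y ^ e * a = y ^ (-e) := hconj e
      have hfree : y⁻¹ * y ^ e * y = y ^ e := by group
      calc (y ^ e)⁻¹ * (y*a)⁻¹ * (y ^ e) * (y*a)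
          = (y ^ e)⁻¹ * (a⁻¹ * (y⁻¹ * y ^ e * y) * a) := by group
        _ = (y ^ e)⁻¹ * (a⁻¹ * y ^ e * a) := by rw [hfree]
        _ = y ^ (-e) * y ^ (-e) := by rw [h1]; group
        _ = y ^ ((-2:ℤ) ^ (n+1+1)) := by
            rw [← zpow_add]; congr 1; rw [he]; ring
  have hm : 0 < orderOf y := orderOf_pos y
  obtain ⟨N, hN⟩ := hR.1 (y * a)
  set m := orderOf y with hmdef
  set n := 2 * m.totient * (N + 1) with hn
  have htot : 0 < m.totient := Nat.totient_pos.mpr hm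
  have hnge : n ≥ N + 1 := by
    calc n = 2 * m.totient * (N+1) := rfl
      _ ≥ 1 * 1 * (N+1) := by
          apply Nat.mul_le_mul_right
          exact Nat.mul_le_mul (by norm_num) htot
      _ = N + 1 := by ring
  have hcop2 : Nat.Coprime 2 m := by
    refine (Nat.prime_two.coprime_iff_not_dvd).mpr (fun h => ?_)
    exact ((Nat.not_even_iff_odd.mpr hodd)) (even_iff_two_dvd.mpr h)
  have hmod : 2 ^ n ≡ 1 [MOD m] := by
    have h := Nat.ModEq.pow_totient hcop2
    calc 2 ^ n = (2 ^ m.totient) ^ (2 * (N+1)) := by rw [← pow_mul, hn]; ring_nf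
      _ ≡ 1 ^ (2 * (N+1)) [MOD m] := h.pow _
      _ = 1 := one_pow _
  have heven : Even n := ⟨m.totient * (N+1), by rw [hn]; ring⟩
  have hpow : y ^ (2 ^ n) = y := by
    have h := pow_eq_pow_iff_modEq.mpr
      (show 2 ^ n ≡ 1 [MOD orderOf y] from hmod)
    rwa [pow_one] at h
  have hneg : ((-2 : ℤ)) ^ n = (2:ℤ) ^ n := by
    rw [neg_pow, heven.neg_one_pow, one_mul]
  have hyR : y ∈ R := by
    have h1 : rcomm a (y*a) n ∈ R := hN n (by omega)
    have h2 : rcomm a (y*a) n = y := by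
      have hkey := key (n - 1)
      have hsub : n - 1 + 1 = n := by omega
      rw [hsub] at hkey
      rw [hkey, hneg]
      rw [show ((2:ℤ))^n = ((2^n : ℕ) : ℤ) by push_cast; ring, zpow_natCast, hpow]
    rwa [h2] at h1
  refine ⟨hyR, fun hc => ?_⟩
  have hcomm := hc y hyR
  have hyy : y⁻¹ = y := by
    calc y⁻¹ = a⁻¹ * y * a := hinv.symm
      _ = a⁻¹ * (a * y) := by rw [mul_assoc, ← hcomm]
      _ = y := by group
  have hy2 : y ^ 2 = 1 := by
    rw [pow_two]; nth_rewrite 1 [← hyy]; exact inv_mul_cancel y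
  have hdvd : orderOf y ∣ 2 := orderOf_dvd_of_pow_eq_one hy2
  rcases (Nat.dvd_prime Nat.prime_two).mp hdvd with h | h
  · exact orderOf_eq_one_iff.mp h
  · rw [← hmdef] at h
    rw [h] at hodd
    exact absurd hodd (by decide)
end
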